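/- arXiv:1508.01892 — 4 statements merged into one kernel-verified Lean document; each statement's English description precedes it below -/
import Mathlib

section
/- Let m1, m2 be positive integers, β1, β2 > 0, and let X and Y be independent random variables such that X is Gamma(m1, β1)-distributed and Y is Gamma(m2, β2)-distributed. Then for every c > 0, the survival probability of the product satisfies P(X·Y > c) = Σ_{i=0}^{m1−1} ((β1 c)^i / i!) · (β2^{m2} / Γ(m2)) · ∫_0^∞ y^{m2−i−1} · exp(−β1 c / y − β2 y) dy. -/
open MeasureTheory ProbabilityTheory Real

namespace GammaProdAux

lemma hasDerivAt_G (m : ℕ) (hm : 0 < m) (β : ℝ) (x : ℝ) :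
    HasDerivAt
      (fun t => -(Real.exp (-(β * t)) * ∑ i ∈ Finset.range m, (β * t) ^ i / (Nat.factorial i)))
      (β ^ m / (Nat.factorial (m - 1)) * x ^ (m - 1) * Real.exp (-(β * x))) x := by
  obtain ⟨n, rfl⟩ : ∃ n, m = n + 1 := ⟨m - 1, (Nat.succ_pred_eq_of_pos hm).symm⟩
  have hlin : HasDerivAt (fun t : ℝ => β * t) β x := by
    simpa using (hasDerivAt_id x).const_mul β
  have hexp : HasDerivAt (fun t : ℝ => Real.exp (-(β * t))) (-β * Real.exp (-(β * x))) x := by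
    have := (hlin.neg).exp
    simpa [mul_comm] using this
  have hsum : HasDerivAt
      (fun t : ℝ => ∑ i ∈ Finset.range (n + 1), (β * t) ^ i / (Nat.factorial i))
      (∑ i ∈ Finset.range (n + 1), ((i : ℝ) * (β * x) ^ (i - 1) * β) / (Nat.factorial i)) x := by
    apply HasDerivAt.fun_sum
    intro i _
    exact (hlin.pow i).div_const _
  have hS' : (∑ i ∈ Finset.range (n + 1), ((i : ℝ) * (β * x) ^ (i - 1) * β) / (Nat.factorial i))
      = β * ∑ j ∈ Finset.range n, (β * x) ^ j / (Nat.factorial j) := by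
    rw [Finset.sum_range_succ', Finset.mul_sum]
    simp only [Nat.cast_zero, zero_mul, Nat.factorial_zero, Nat.cast_one, zero_div, add_zero,
      Nat.add_sub_cancel]
    refine Finset.sum_congr rfl fun j _ => ?_
    have h1 : ((Nat.factorial j : ℝ)) ≠ 0 := Nat.cast_ne_zero.mpr (Nat.factorial_ne_zero j)
    rw [Nat.factorial_succ]
    push_cast
    field_simp
  have htot := (hexp.mul hsum).neg
  rw [hS'] at htot
  refine htot.congr_deriv ?_
  rw [Finset.sum_range_succ]
  have h1 : ((Nat.factorial n : ℝ)) ≠ 0 := Nat.cast_ne_zero.mpr (Nat.factorial_ne_zero n)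
  simp only [Nat.add_sub_cancel]
  rw [mul_pow]
  field_simp
  ring

lemma gamma_Ioi (m : ℕ) (hm : 0 < m) {β : ℝ} (hβ : 0 < β) {t : ℝ} (ht : 0 < t) :
    gammaMeasure m β (Set.Ioi t) =
      ENNReal.ofReal
        (Real.exp (-(β * t)) * ∑ i ∈ Finset.range m, (β * t) ^ i / (Nat.factorial i)) := by
  set g' : ℝ → ℝ := fun x => β ^ m / (Nat.factorial (m - 1)) * x ^ (m - 1) * Real.exp (-(β * x))
    with hg'
  have hderiv : ∀ x ∈ Set.Ici t, HasDerivAt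
      (fun t => -(Real.exp (-(β * t)) * ∑ i ∈ Finset.range m, (β * t) ^ i / (Nat.factorial i)))
      (g' x) x := fun x _ => hasDerivAt_G m hm β x
  have hpos : ∀ x ∈ Set.Ioi t, 0 ≤ g' x := by
    intro x hx
    have hx0 : 0 < x := ht.trans hx
    rw [hg']
    positivity
  have htend : Filter.Tendsto
      (fun t => -(Real.exp (-(β * t)) * ∑ i ∈ Finset.range m, (β * t) ^ i / (Nat.factorial i)))
      Filter.atTop (nhds 0) := by
    have h0 : Filter.Tendsto
        (fun u => Real.exp (-(β * u)) * ∑ i ∈ Finset.range m, (β * u) ^ i / (Nat.factorial i))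
        Filter.atTop (nhds 0) := by
      have heq : ∀ u : ℝ, Real.exp (-(β * u)) * ∑ i ∈ Finset.range m, (β * u) ^ i / (Nat.factorial i)
          = ∑ i ∈ Finset.range m, ((β * u) ^ i * Real.exp (-(β * u))) / (Nat.factorial i) := by
        intro u
        rw [Finset.mul_sum]
        refine Finset.sum_congr rfl fun i _ => ?_
        ring
      simp_rw [heq]
      have : Filter.Tendsto (fun u : ℝ => β * u) Filter.atTop Filter.atTop :=
        Filter.Tendsto.const_mul_atTop hβ Filter.tendsto_id
      have hzero : (0 : ℝ) = ∑ i ∈ Finset.range m, (0 : ℝ) / (Nat.factorial i) := by simp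
      rw [hzero]
      refine tendsto_finset_sum _ fun i _ => ?_
      exact Filter.Tendsto.div_const
        ((tendsto_pow_mul_exp_neg_atTop_nhds_zero i).comp this) _
    simpa using h0.neg
  have hint : IntegrableOn g' (Set.Ioi t) :=
    integrableOn_Ioi_deriv_of_nonneg' hderiv hpos htend
  have hval : ∫ x in Set.Ioi t, g' x
      = Real.exp (-(β * t)) * ∑ i ∈ Finset.range m, (β * t) ^ i / (Nat.factorial i) := by
    rw [integral_Ioi_of_hasDerivAt_of_nonneg' hderiv hpos htend]
    ring
  have hpdf : ∀ x ∈ Set.Ioi t, gammaPDF m β x = ENNReal.ofReal (g' x) := by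
    intro x hx
    have hx0 : 0 < x := ht.trans hx
    rw [gammaPDF_of_nonneg hx0.le, hg']
    congr 1
    have hΓ : Real.Gamma (m : ℝ) = (Nat.factorial (m - 1) : ℝ) := by
      rw [show ((m : ℝ)) = ((m - 1 : ℕ) : ℝ) + 1 by push_cast [Nat.cast_sub hm]; ring,
        Real.Gamma_nat_eq_factorial]
    have hb : β ^ ((m : ℝ)) = β ^ m := Real.rpow_natCast β m
    have hx' : x ^ ((m : ℝ) - 1) = x ^ (m - 1 : ℕ) := by
      rw [show ((m : ℝ) - 1) = ((m - 1 : ℕ) : ℝ) by push_cast [Nat.cast_sub hm]; ring,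
        Real.rpow_natCast]
    rw [hΓ, hb, hx']
  rw [gammaMeasure, withDensity_apply _ measurableSet_Ioi,
    setLIntegral_congr_fun measurableSet_Ioi hpdf, ← hval]
  refine (ofReal_integral_eq_lintegral_ofReal hint ?_).symm
  exact (ae_restrict_iff' measurableSet_Ioi).mpr (ae_of_all _ hpos)

lemma gamma_Iio_zero (m β : ℝ) : gammaMeasure m β (Set.Iio 0) = 0 := by
  rw [gammaMeasure, withDensity_apply _ measurableSet_Iio]
  exact lintegral_gammaPDF_of_nonpos le_rfl

end GammaProdAux

/-- For positive integers `m1, m2` and rates `β1, β2 > 0`, if `X ~ Gamma(m1, β1)` and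
`Y ~ Gamma(m2, β2)` are independent, then for every `c > 0`,
`P(X·Y > c) = Σ_{i=0}^{m1−1} ((β1 c)^i / i!) · (β2^{m2} / Γ(m2)) ·
  ∫_0^∞ y^{m2−i−1} exp(−β1 c / y − β2 y) dy`. -/
theorem gamma_product_survival
    {Ω : Type*} [MeasurableSpace Ω] (P : Measure Ω) [IsProbabilityMeasure P]
    (m1 m2 : ℕ) (hm1 : 0 < m1) (hm2 : 0 < m2)
    (β1 β2 : ℝ) (hβ1 : 0 < β1) (hβ2 : 0 < β2)
    (X Y : Ω → ℝ) (hX : Measurable X) (hY : Measurable Y)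
    (hXd : Measure.map X P = gammaMeasure m1 β1)
    (hYd : Measure.map Y P = gammaMeasure m2 β2)
    (hInd : IndepFun X Y P)
    (c : ℝ) (hc : 0 < c) :
    (P {ω | c < X ω * Y ω}).toReal =
      ∑ i ∈ Finset.range m1,
        ((β1 * c) ^ i / (Nat.factorial i)) * (β2 ^ m2 / Real.Gamma m2) *
          ∫ y in Set.Ioi (0 : ℝ),
            y ^ ((m2 : ℝ) - i - 1) * Real.exp (-(β1 * c) / y - β2 * y) := by
  have hm1R : (0 : ℝ) < (m1 : ℝ) := by exact_mod_cast hm1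
  have hm2R : (0 : ℝ) < (m2 : ℝ) := by exact_mod_cast hm2
  haveI h1p : IsProbabilityMeasure (gammaMeasure m1 β1) := isProbabilityMeasure_gammaMeasure hm1R hβ1
  haveI h2p : IsProbabilityMeasure (gammaMeasure m2 β2) := isProbabilityMeasure_gammaMeasure hm2R hβ2
  -- the survival function of X evaluated along y
  set sf : ℝ → ℝ := fun y => if 0 < y then
      Real.exp (-(β1 * (c / y))) *
        ∑ i ∈ Finset.range m1, (β1 * (c / y)) ^ i / (Nat.factorial i)
    else 0 with hsf
  have hmsf : Measurable sf := by
    refine Measurable.ite (measurableSet_lt measurable_const measurable_id) ?_ measurable_const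
    exact (((measurable_const.div measurable_id).const_mul β1).neg.exp).mul
      (Finset.measurable_sum _ fun i _ =>
        (((measurable_const.div measurable_id).const_mul β1).pow_const i).div_const _)
  have hsf_nonneg : ∀ y, 0 ≤ sf y := by
    intro y
    rw [hsf]
    dsimp only
    split_ifs with hy
    · positivity
    · exact le_rfl
  have hsf_le_one : ∀ y, sf y ≤ 1 := by
    intro y
    rw [hsf]
    dsimp only
    split_ifs with hy
    · have hu : 0 ≤ β1 * (c / y) := by positivity
      calc Real.exp (-(β1 * (c / y))) *
            ∑ i ∈ Finset.range m1, (β1 * (c / y)) ^ i / (Nat.factorial i)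
          ≤ Real.exp (-(β1 * (c / y))) * Real.exp (β1 * (c / y)) :=
            mul_le_mul_of_nonneg_left (Real.sum_le_exp_of_nonneg hu m1) (Real.exp_pos _).le
        _ = 1 := by rw [← Real.exp_add, neg_add_cancel, Real.exp_zero]
    · norm_num
  -- step 1 : reduce to the product measure
  have hS : MeasurableSet {p : ℝ × ℝ | c < p.1 * p.2} :=
    measurableSet_lt measurable_const (measurable_fst.mul measurable_snd)
  have h1 : P {ω | c < X ω * Y ω}
      = (gammaMeasure m1 β1).prod (gammaMeasure m2 β2) {p : ℝ × ℝ | c < p.1 * p.2} := by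
    have hmap := (indepFun_iff_map_prod_eq_prod_map_map hX.aemeasurable hY.aemeasurable).mp hInd
    rw [hXd, hYd] at hmap
    rw [← hmap, Measure.map_apply (hX.prodMk hY) hS]
    rfl
  -- step 2 : slice along the second coordinate
  have h2 : (gammaMeasure m1 β1).prod (gammaMeasure m2 β2) {p : ℝ × ℝ | c < p.1 * p.2}
      = ∫⁻ y, ENNReal.ofReal (sf y) ∂(gammaMeasure m2 β2) := by
    rw [Measure.prod_apply_symm hS]
    refine lintegral_congr fun y => ?_
    by_cases hy : 0 < y
    · have hset : ((fun x => (x, y)) ⁻¹' {p : ℝ × ℝ | c < p.1 * p.2}) = Set.Ioi (c / y) := by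
        ext x
        simp [Set.mem_Ioi, div_lt_iff₀ hy]
      rw [hset, GammaProdAux.gamma_Ioi m1 hm1 hβ1 (div_pos hc hy)]
      rw [hsf]
      simp only [if_pos hy]
    · have hset : ((fun x => (x, y)) ⁻¹' {p : ℝ × ℝ | c < p.1 * p.2}) ⊆ Set.Iio 0 := by
        intro x hx
        simp only [Set.mem_preimage, Set.mem_setOf_eq] at hx
        simp only [Set.mem_Iio]
        by_contra h
        push_neg at h
        have : x * y ≤ 0 := mul_nonpos_of_nonneg_of_nonpos h (le_of_not_gt hy)
        linarith
      have hz := measure_mono (μ := gammaMeasure m1 β1) hset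
      rw [GammaProdAux.gamma_Iio_zero] at hz
      have hz0 : gammaMeasure m1 β1 ((fun x => (x, y)) ⁻¹' {p : ℝ × ℝ | c < p.1 * p.2}) = 0 :=
        le_antisymm hz zero_le
      rw [hz0, hsf]
      simp [hy]
  -- step 3 : unfold the density of Y
  have h3 : (∫⁻ y, ENNReal.ofReal (sf y) ∂(gammaMeasure m2 β2))
      = ∫⁻ y, ENNReal.ofReal (gammaPDFReal m2 β2 y * sf y) := by
    have hmpdf : Measurable (gammaPDF (m2 : ℝ) β2) :=
      (measurable_gammaPDFReal _ _).ennreal_ofReal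
    rw [gammaMeasure, lintegral_withDensity_eq_lintegral_mul _ hmpdf (hmsf.ennreal_ofReal)]
    refine lintegral_congr fun y => ?_
    simp only [Pi.mul_apply, gammaPDF]
    rw [← ENNReal.ofReal_mul (gammaPDFReal_nonneg hm2R hβ2 y)]
  -- integrability of the density and of the integrand
  have hpdf_int : Integrable (gammaPDFReal m2 β2) := by
    refine ⟨(measurable_gammaPDFReal _ _).aestronglyMeasurable, ?_⟩
    rw [hasFiniteIntegral_iff_norm]
    have : ∀ y, ENNReal.ofReal ‖gammaPDFReal (m2 : ℝ) β2 y‖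
        = gammaPDF m2 β2 y := by
      intro y
      rw [Real.norm_eq_abs, abs_of_nonneg (gammaPDFReal_nonneg hm2R hβ2 y)]
      rfl
    simp_rw [this]
    rw [lintegral_gammaPDF_eq_one hm2R hβ2]
    exact ENNReal.one_lt_top
  have hg_int : Integrable (fun y => gammaPDFReal m2 β2 y * sf y) := by
    refine hpdf_int.mono ((measurable_gammaPDFReal _ _).mul hmsf).aestronglyMeasurable
      (ae_of_all _ fun y => ?_)
    rw [Real.norm_eq_abs, Real.norm_eq_abs,
      abs_of_nonneg (mul_nonneg (gammaPDFReal_nonneg hm2R hβ2 y) (hsf_nonneg y)),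
      abs_of_nonneg (gammaPDFReal_nonneg hm2R hβ2 y)]
    calc gammaPDFReal m2 β2 y * sf y ≤ gammaPDFReal m2 β2 y * 1 :=
          mul_le_mul_of_nonneg_left (hsf_le_one y) (gammaPDFReal_nonneg hm2R hβ2 y)
      _ = gammaPDFReal m2 β2 y := mul_one _
  have h4 : (∫⁻ y, ENNReal.ofReal (gammaPDFReal m2 β2 y * sf y))
      = ENNReal.ofReal (∫ y, gammaPDFReal m2 β2 y * sf y) :=
    (ofReal_integral_eq_lintegral_ofReal hg_int
      (ae_of_all _ fun y => mul_nonneg (gammaPDFReal_nonneg hm2R hβ2 y) (hsf_nonneg y))).symm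
  have h5 : (P {ω | c < X ω * Y ω}).toReal = ∫ y, gammaPDFReal m2 β2 y * sf y := by
    rw [h1, h2, h3, h4, ENNReal.toReal_ofReal]
    exact integral_nonneg fun y => mul_nonneg (gammaPDFReal_nonneg hm2R hβ2 y) (hsf_nonneg y)
  -- restrict to (0, ∞)
  have h6 : (∫ y, gammaPDFReal m2 β2 y * sf y)
      = ∫ y in Set.Ioi (0 : ℝ), gammaPDFReal m2 β2 y * sf y := by
    refine (setIntegral_eq_integral_of_forall_compl_eq_zero fun y hy => ?_).symm
    have hy' : ¬ (0 < y) := by simpa using hy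
    rw [hsf]
    simp [hy']
  -- the summands
  set T : ℕ → ℝ → ℝ := fun i y => gammaPDFReal m2 β2 y *
      (Real.exp (-(β1 * (c / y))) * ((β1 * (c / y)) ^ i / (Nat.factorial i))) with hT
  have hsum_eq : ∀ y ∈ Set.Ioi (0 : ℝ),
      gammaPDFReal m2 β2 y * sf y = ∑ i ∈ Finset.range m1, T i y := by
    intro y hy
    rw [hsf, hT]
    simp only [Set.mem_Ioi] at hy
    simp only [if_pos hy]
    rw [Finset.mul_sum, Finset.mul_sum]
    try refine Finset.sum_congr rfl fun i _ => ?_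
    try ring
  have hT_int : ∀ i, IntegrableOn (T i) (Set.Ioi (0 : ℝ)) := by
    intro i
    refine MeasureTheory.Integrable.mono hpdf_int.integrableOn ?_ ?_
    · exact (((measurable_gammaPDFReal _ _).mul
        ((((measurable_const.div measurable_id).const_mul β1).neg.exp).mul
          ((((measurable_const.div measurable_id).const_mul β1).pow_const i).div_const
            _)))).aestronglyMeasurable
    · refine (ae_restrict_iff' measurableSet_Ioi).mpr (ae_of_all _ fun y hy => ?_)
      simp only [Set.mem_Ioi] at hy
      have hu : 0 ≤ β1 * (c / y) := by positivity
      have hfac : Real.exp (-(β1 * (c / y))) * ((β1 * (c / y)) ^ i / (Nat.factorial i)) ≤ 1 := by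
        have hle : (β1 * (c / y)) ^ i / (Nat.factorial i) ≤ Real.exp (β1 * (c / y)) := by
          refine le_trans ?_ (Real.sum_le_exp_of_nonneg hu (i + 1))
          exact Finset.single_le_sum (f := fun j => (β1 * (c / y)) ^ j / (Nat.factorial j))
            (fun j _ => by positivity) (Finset.self_mem_range_succ i)
        calc Real.exp (-(β1 * (c / y))) * ((β1 * (c / y)) ^ i / (Nat.factorial i))
            ≤ Real.exp (-(β1 * (c / y))) * Real.exp (β1 * (c / y)) :=
              mul_le_mul_of_nonneg_left hle (Real.exp_pos _).le
          _ = 1 := by rw [← Real.exp_add, neg_add_cancel, Real.exp_zero]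
      have hnn : 0 ≤ T i y := by
        rw [hT]
        exact mul_nonneg (gammaPDFReal_nonneg hm2R hβ2 y) (by positivity)
      rw [Real.norm_eq_abs, Real.norm_eq_abs, abs_of_nonneg hnn,
        abs_of_nonneg (gammaPDFReal_nonneg hm2R hβ2 y), hT]
      calc gammaPDFReal m2 β2 y *
            (Real.exp (-(β1 * (c / y))) * ((β1 * (c / y)) ^ i / (Nat.factorial i)))
          ≤ gammaPDFReal m2 β2 y * 1 :=
            mul_le_mul_of_nonneg_left hfac (gammaPDFReal_nonneg hm2R hβ2 y)
        _ = gammaPDFReal m2 β2 y := mul_one _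
  -- evaluate each summand
  have h8 : ∀ i ∈ Finset.range m1, (∫ y in Set.Ioi (0 : ℝ), T i y)
      = ((β1 * c) ^ i / (Nat.factorial i)) * (β2 ^ m2 / Real.Gamma m2) *
        ∫ y in Set.Ioi (0 : ℝ), y ^ ((m2 : ℝ) - i - 1) * Real.exp (-(β1 * c) / y - β2 * y) := by
    intro i _
    rw [← integral_const_mul]
    refine setIntegral_congr_fun measurableSet_Ioi fun y hy => ?_
    simp only [Set.mem_Ioi] at hy
    have hb : β2 ^ ((m2 : ℝ)) = β2 ^ m2 := Real.rpow_natCast β2 m2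
    have he2 : y ^ ((m2 : ℝ) - ↑i - 1) = y ^ ((m2 : ℝ) - 1) / y ^ i := by
      rw [show ((m2 : ℝ) - ↑i - 1) = ((m2 : ℝ) - 1) - (i : ℕ) by push_cast; ring,
        Real.rpow_sub hy, Real.rpow_natCast]
    have he3 : Real.exp (-(β1 * c) / y - β2 * y)
        = Real.exp (-(β1 * (c / y))) * Real.exp (-(β2 * y)) := by
      rw [← Real.exp_add]
      congr 1
      field_simp
      ring
    have he4 : (β1 * (c / y)) ^ i = (β1 * c) ^ i / y ^ i := by
      rw [mul_div_assoc', div_pow]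
    have hyne : y ≠ 0 := ne_of_gt hy
    have hyine : y ^ i ≠ 0 := pow_ne_zero _ hyne
    have hfacne : ((Nat.factorial i : ℝ)) ≠ 0 := Nat.cast_ne_zero.mpr (Nat.factorial_ne_zero i)
    have hΓne : Real.Gamma (m2 : ℝ) ≠ 0 := ne_of_gt (Real.Gamma_pos_of_pos hm2R)
    rw [hT]
    simp only [gammaPDFReal, if_pos hy.le, hb, he2, he3, he4]
    field_simp
  rw [h5, h6, setIntegral_congr_fun measurableSet_Ioi (fun y hy => hsum_eq y hy),
    integral_finset_sum _ (fun i _ => hT_int i)]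
  exact Finset.sum_congr rfl h8
end

section
/- (Proposition 1, exact integral form.) Let m_AS, m_SA be positive integers, β_AS, β_SA > 0, and let h_AS and h_SA be independent random variables that are Gamma(m_AS, β_AS)- and Gamma(m_SA, β_SA)-distributed, respectively. Let μ1 > 0, let R > 0, and set υ1 = 2^R − 1. Then the outage probability of the harvest-then-transmit protocol satisfies P( log₂(1 + μ1 · h_AS · h_SA) < R ) = 1 − Σ_{i=0}^{m_AS−1} ((β_AS υ1/μ1)^i / i!) · (β_SA^{m_SA} / Γ(m_SA)) · ∫_0^∞ y^{m_SA−i−1} · exp(−β_AS υ1 / (μ1 y) − β_SA y) dy. -/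
open MeasureTheory ProbabilityTheory Real

open scoped ENNReal NNReal
open MeasureTheory ProbabilityTheory Real Set Filter Topology

lemma hasDerivAt_gammaTail (β : ℝ) (k : ℕ) (x : ℝ) :
    HasDerivAt (fun x => -(Real.exp (-(β*x)) * ∑ i ∈ Finset.range (k+1), (β*x)^i / i.factorial))
      (β * (β*x)^k / k.factorial * Real.exp (-(β*x))) x := by
  induction k with
  | zero =>
      have h1 : HasDerivAt (fun x : ℝ => -(β*x)) (-β) x := by
        have h0 : HasDerivAt (fun y : ℝ => -(β * id y)) (-(β * 1)) x := ((hasDerivAt_id x).const_mul β).neg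
        simpa using h0
      have h2 := h1.exp
      have h3 : HasDerivAt (fun x : ℝ => -(Real.exp (-(β*x)) * ∑ i ∈ Finset.range 1, (β*x)^i / i.factorial)) (-(Real.exp (-(β*x)) * -β)) x := by
        have h4 : HasDerivAt (fun x : ℝ => -Real.exp (-(β*x))) (-(Real.exp (-(β*x)) * -β)) x := h2.neg
        simpa [Finset.sum_range_one] using h4
      convert h3 using 1
      simp; ring
  | succ k ih =>
      have hpow : HasDerivAt (fun x : ℝ => (β*x)^(k+1)) ((k+1 : ℕ) * (β*x)^k * β) x :=
        ((hasDerivAt_id x).const_mul β |>.congr_deriv (by simp)).pow (k+1)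
      have hexp : HasDerivAt (fun x : ℝ => Real.exp (-(β*x))) (Real.exp (-(β*x)) * -β) x := by
        simpa using (((hasDerivAt_id x).const_mul β).neg).exp
      have hterm : HasDerivAt (fun x : ℝ => Real.exp (-(β*x)) * ((β*x)^(k+1) / (k+1).factorial))
          (Real.exp (-(β*x)) * -β * ((β*x)^(k+1) / (k+1).factorial)
            + Real.exp (-(β*x)) * ((k+1 : ℕ) * (β*x)^k * β / (k+1).factorial)) x :=
        hexp.mul (hpow.div_const _)
      have hsum := ih.sub hterm
      have heq : (fun x : ℝ => -(Real.exp (-(β*x)) * ∑ i ∈ Finset.range (k+1), (β*x)^i / i.factorial)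
          - Real.exp (-(β*x)) * ((β*x)^(k+1) / (k+1).factorial))
          = (fun x : ℝ => -(Real.exp (-(β*x)) * ∑ i ∈ Finset.range (k+2), (β*x)^i / i.factorial)) := by
        funext x
        rw [Finset.sum_range_succ _ (k+1)]
        ring
      simp only [Pi.sub_def] at hsum; rw [heq] at hsum
      refine hsum.congr_deriv ?_
      have hfac : ((k+1).factorial : ℝ) = (k+1) * k.factorial := by
        rw [Nat.factorial_succ]; push_cast; ring
      rw [hfac]; push_cast
      field_simp [hfac]
      ring

lemma gammaMeasure_Iic_zero (a β : ℝ) : gammaMeasure a β (Iic 0) = 0 := by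
  rw [gammaMeasure, withDensity_apply _ measurableSet_Iic,
    ← setLIntegral_congr (Iio_ae_eq_Iic (a := (0:ℝ)))]
  exact lintegral_gammaPDF_of_nonpos le_rfl

lemma gammaMeasure_Ioi (k : ℕ) {β t : ℝ} (hβ : 0 < β) (ht : 0 < t) :
    gammaMeasure ((k+1 : ℕ) : ℝ) β (Ioi t)
      = ENNReal.ofReal (Real.exp (-(β*t)) * ∑ i ∈ Finset.range (k+1), (β*t)^i / i.factorial) := by
  set g : ℝ → ℝ := fun x => β * (β*x)^k / k.factorial * Real.exp (-(β*x)) with hg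
  set F : ℝ → ℝ := fun x => -(Real.exp (-(β*x)) * ∑ i ∈ Finset.range (k+1), (β*x)^i / i.factorial) with hF
  have hderiv : ∀ x ∈ Ioi t, HasDerivAt F (g x) x := fun x _ => hasDerivAt_gammaTail β k x
  have hcont : ContinuousWithinAt F (Ici t) t :=
    (hasDerivAt_gammaTail β k t).continuousAt.continuousWithinAt
  have hpos : ∀ x ∈ Ioi t, 0 ≤ g x := fun x hx => by
    have hx0 : 0 < x := ht.trans hx
    have : 0 ≤ β * x := by positivity
    simp only [hg]
    positivity
  have h1 : Tendsto (fun x : ℝ => β * x) atTop atTop := tendsto_id.const_mul_atTop hβ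
  have h2 : ∀ i : ℕ, Tendsto (fun x : ℝ => (β*x)^i * Real.exp (-(β*x)) / i.factorial) atTop (𝓝 0) := by
    intro i
    have h := ((tendsto_pow_mul_exp_neg_atTop_nhds_zero i).comp h1).div_const (i.factorial : ℝ)
    simpa [Function.comp] using h
  have hsum : Tendsto (fun x : ℝ => ∑ i ∈ Finset.range (k+1),
      (β*x)^i * Real.exp (-(β*x)) / i.factorial) atTop (𝓝 0) := by
    have := tendsto_finset_sum (Finset.range (k+1)) (fun i _ => h2 i)
    simpa using this
  have htend : Tendsto F atTop (𝓝 0) := by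
    have hFeq : F = fun x => -∑ i ∈ Finset.range (k+1), (β*x)^i * Real.exp (-(β*x)) / i.factorial := by
      funext x
      simp only [hF]
      rw [Finset.mul_sum]
      congr 1
      exact Finset.sum_congr rfl fun i _ => by ring
    rw [hFeq]
    simpa using hsum.neg
  have hval := integral_Ioi_of_hasDerivAt_of_nonneg hcont hderiv hpos htend
  have hInt := integrableOn_Ioi_deriv_of_nonneg hcont hderiv hpos htend
  have hpdf : ∀ x ∈ Ioi t, gammaPDF ((k+1:ℕ):ℝ) β x = ENNReal.ofReal (g x) := by
    intro x hx
    have hx0 : 0 < x := ht.trans hx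
    rw [gammaPDF_of_nonneg hx0.le]
    congr 1
    have hcast : (((k+1:ℕ):ℝ)) = (k:ℝ) + 1 := by push_cast; ring
    rw [hcast, Real.Gamma_nat_eq_factorial k,
      show (k:ℝ) + 1 - 1 = ((k:ℕ):ℝ) by ring,
      Real.rpow_natCast, show ((k:ℝ) + 1) = (((k+1:ℕ)):ℝ) by push_cast; ring,
      Real.rpow_natCast]
    simp only [hg, mul_pow]
    field_simp
    ring
  rw [gammaMeasure, withDensity_apply _ measurableSet_Ioi,
    setLIntegral_congr_fun measurableSet_Ioi hpdf,
    ← ofReal_integral_eq_lintegral_ofReal hInt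
      ((ae_restrict_iff' measurableSet_Ioi).2 (ae_of_all _ hpos)),
    hval]
  congr 1
  simp [hF]

lemma gammaMeasure_Iio_eq (k : ℕ) {β t : ℝ} (hβ : 0 < β) (ht : 0 < t) :
    gammaMeasure ((k+1 : ℕ) : ℝ) β (Iio t)
      = 1 - ENNReal.ofReal (Real.exp (-(β*t)) * ∑ i ∈ Finset.range (k+1), (β*t)^i / i.factorial) := by
  haveI : IsProbabilityMeasure (gammaMeasure ((k+1:ℕ):ℝ) β) :=
    isProbabilityMeasure_gammaMeasure (by positivity) hβ
  have hac : gammaMeasure ((k+1:ℕ):ℝ) β ≪ volume := by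
    rw [gammaMeasure]; exact withDensity_absolutelyContinuous _ _
  have hIci : gammaMeasure ((k+1:ℕ):ℝ) β (Ici t) = gammaMeasure ((k+1:ℕ):ℝ) β (Ioi t) :=
    (measure_congr ((Ioi_ae_eq_Ici (a := t)).filter_mono hac.ae_le)).symm
  rw [← compl_Ici, measure_compl measurableSet_Ici (measure_ne_top _ _), measure_univ, hIci,
    gammaMeasure_Ioi k hβ ht]

lemma htt_alg (m i : ℕ) (βAS βSA μ1 υ1 : ℝ) (hμ1 : 0 < μ1) {y : ℝ} (hy : 0 < y) :
    gammaPDFReal (m:ℝ) βSA y *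
        (Real.exp (-(βAS*(υ1/μ1/y))) * ((βAS*(υ1/μ1/y))^i / (i.factorial : ℝ)))
      = ((βAS * υ1 / μ1) ^ i / (i.factorial : ℝ)) * (βSA ^ m / Real.Gamma m) *
        (y ^ ((m:ℝ) - i - 1) * Real.exp (-(βAS * υ1) / (μ1 * y) - βSA * y)) := by
  rw [gammaPDFReal, if_pos hy.le, Real.rpow_natCast]
  have hexp : Real.exp (-(βAS * υ1) / (μ1 * y) - βSA * y)
      = Real.exp (-(βAS*(υ1/μ1/y))) * Real.exp (-(βSA * y)) := by
    rw [← Real.exp_add]; congr 1; field_simp; ring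
  have hypow : y ^ ((m:ℝ) - i - 1) = y ^ ((m:ℝ) - 1) * (y ^ i)⁻¹ := by
    rw [show (m:ℝ) - i - 1 = ((m:ℝ) - 1) + (-(i:ℝ)) by ring, Real.rpow_add hy,
      Real.rpow_neg hy.le, Real.rpow_natCast]
  have hpowi : (βAS*(υ1/μ1/y))^i = (βAS*υ1/μ1)^i * (y ^ i)⁻¹ := by
    rw [show βAS*(υ1/μ1/y) = (βAS*υ1/μ1) / y by ring, div_pow, div_eq_mul_inv]
  rw [hexp, hypow, hpowi]
  ring
/-- Proposition 1 (exact integral form): outage probability of the HTT protocol.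
If `h_AS ~ Gamma(m_AS, β_AS)` and `h_SA ~ Gamma(m_SA, β_SA)` are independent, `μ1 > 0`,
`R > 0` and `υ1 = 2^R − 1`, then
`P(log₂(1 + μ1 h_AS h_SA) < R) = 1 − Σ_{i=0}^{m_AS−1} ((β_AS υ1/μ1)^i / i!) ·
  (β_SA^{m_SA}/Γ(m_SA)) ∫_0^∞ y^{m_SA−i−1} exp(−β_AS υ1/(μ1 y) − β_SA y) dy`. -/
theorem htt_outage_probability
    {Ω : Type*} [MeasurableSpace Ω] (P : Measure Ω) [IsProbabilityMeasure P]
    (mAS mSA : ℕ) (hmAS : 0 < mAS) (hmSA : 0 < mSA)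
    (βAS βSA : ℝ) (hβAS : 0 < βAS) (hβSA : 0 < βSA)
    (hAS hSA : Ω → ℝ) (hmeasAS : Measurable hAS) (hmeasSA : Measurable hSA)
    (hdAS : Measure.map hAS P = gammaMeasure mAS βAS)
    (hdSA : Measure.map hSA P = gammaMeasure mSA βSA)
    (hInd : IndepFun hAS hSA P)
    (μ1 R υ1 : ℝ) (hμ1 : 0 < μ1) (hR : 0 < R) (hυ1 : υ1 = 2 ^ R - 1) :
    (P {ω | Real.logb 2 (1 + μ1 * (hAS ω * hSA ω)) < R}).toReal =
      1 - ∑ i ∈ Finset.range mAS,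
        ((βAS * υ1 / μ1) ^ i / (Nat.factorial i)) * (βSA ^ mSA / Real.Gamma mSA) *
          ∫ y in Set.Ioi (0 : ℝ),
            y ^ ((mSA : ℝ) - i - 1) *
              Real.exp (-(βAS * υ1) / (μ1 * y) - βSA * y) := by
  obtain ⟨kA, rfl⟩ : ∃ k, mAS = k + 1 := ⟨mAS - 1, (Nat.succ_pred_eq_of_pos hmAS).symm⟩
  haveI hPμ : IsProbabilityMeasure (gammaMeasure ((kA+1:ℕ):ℝ) βAS) :=
    isProbabilityMeasure_gammaMeasure (by positivity) hβAS
  haveI hPν : IsProbabilityMeasure (gammaMeasure (mSA:ℝ) βSA) :=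
    isProbabilityMeasure_gammaMeasure (Nat.cast_pos.mpr hmSA) hβSA
  have hυ : 0 < υ1 := by
    rw [hυ1]
    have h2 : (1:ℝ) < 2 ^ R := by
      exact (Real.one_lt_rpow_iff_of_pos (by norm_num)).mpr (Or.inl ⟨by norm_num, hR⟩)
    linarith
  set c : ℝ := υ1 / μ1 with hc
  have hc0 : 0 < c := div_pos hυ hμ1
  -- a.e. positivity of the random variables
  have haeX : ∀ᵐ ω ∂P, 0 < hAS ω := by
    rw [ae_iff]
    have hset : {ω | ¬ 0 < hAS ω} = hAS ⁻¹' (Iic 0) := by ext ω; simp [not_lt]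
    rw [hset, ← Measure.map_apply hmeasAS measurableSet_Iic, hdAS]
    exact gammaMeasure_Iic_zero _ _
  have haeY : ∀ᵐ ω ∂P, 0 < hSA ω := by
    rw [ae_iff]
    have hset : {ω | ¬ 0 < hSA ω} = hSA ⁻¹' (Iic 0) := by ext ω; simp [not_lt]
    rw [hset, ← Measure.map_apply hmeasSA measurableSet_Iic, hdSA]
    exact gammaMeasure_Iic_zero _ _
  -- rewrite the event
  have hsets : {ω | Real.logb 2 (1 + μ1 * (hAS ω * hSA ω)) < R}
      =ᵐ[P] {ω | hAS ω * hSA ω < c} := by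
    filter_upwards [haeX, haeY] with ω hx hy
    have hq : 0 < hAS ω * hSA ω := mul_pos hx hy
    have hpos : (0:ℝ) < 1 + μ1 * (hAS ω * hSA ω) := by nlinarith
    show (Real.logb 2 (1 + μ1 * (hAS ω * hSA ω)) < R) = (hAS ω * hSA ω < c)
    rw [eq_iff_iff, Real.logb_lt_iff_lt_rpow (by norm_num) hpos, hc, lt_div_iff₀ hμ1, hυ1]
    constructor <;> intro h <;> nlinarith [mul_comm μ1 (hAS ω * hSA ω)]
  have h1 : P {ω | Real.logb 2 (1 + μ1 * (hAS ω * hSA ω)) < R}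
      = P {ω | hAS ω * hSA ω < c} := measure_congr hsets
  have hSmeas : MeasurableSet {p : ℝ × ℝ | p.1 * p.2 < c} :=
    measurableSet_lt (measurable_fst.mul measurable_snd) measurable_const
  have hmap : Measure.map (fun ω => (hAS ω, hSA ω)) P
      = (gammaMeasure ((kA+1:ℕ):ℝ) βAS).prod (gammaMeasure (mSA:ℝ) βSA) := by
    rw [← hdAS, ← hdSA]
    exact (indepFun_iff_map_prod_eq_prod_map_map hmeasAS.aemeasurable hmeasSA.aemeasurable).mp hInd
  have h2 : P {ω | hAS ω * hSA ω < c}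
      = ((gammaMeasure ((kA+1:ℕ):ℝ) βAS).prod (gammaMeasure (mSA:ℝ) βSA))
          {p : ℝ × ℝ | p.1 * p.2 < c} := by
    rw [← hmap, Measure.map_apply (hmeasAS.prodMk hmeasSA) hSmeas]
    rfl
  rw [h1, h2, Measure.prod_apply_symm hSmeas]
  -- the inner functions
  set u : ℕ → ℝ → ℝ := fun i y =>
    Real.exp (-(βAS*(c/y))) * ((βAS*(c/y))^i / (i.factorial : ℝ)) with hu
  set T : ℝ → ℝ := fun y => ∑ i ∈ Finset.range (kA+1), u i y with hT
  have haeY' : ∀ᵐ y ∂(gammaMeasure (mSA:ℝ) βSA), 0 < y := by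
    rw [ae_iff]
    have hset : {y : ℝ | ¬ 0 < y} = Iic 0 := by ext y; simp [not_lt]
    rw [hset]
    exact gammaMeasure_Iic_zero _ _
  have hTrepr : ∀ {y : ℝ}, T y = Real.exp (-(βAS*(c/y)))
      * ∑ i ∈ Finset.range (kA+1), (βAS*(c/y))^i / (i.factorial : ℝ) := by
    intro y
    simp only [hT, hu, Finset.mul_sum]
  have key : ∀ᵐ y ∂(gammaMeasure (mSA:ℝ) βSA),
      (gammaMeasure ((kA+1:ℕ):ℝ) βAS) ((fun x => (x, y)) ⁻¹' {p : ℝ × ℝ | p.1 * p.2 < c})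
        = 1 - ENNReal.ofReal (T y) := by
    filter_upwards [haeY'] with y hy
    have hpre : ((fun x => (x, y)) ⁻¹' {p : ℝ × ℝ | p.1 * p.2 < c}) = Iio (c/y) := by
      ext x; exact (lt_div_iff₀ hy).symm
    rw [hpre, gammaMeasure_Iio_eq kA hβAS (div_pos hc0 hy), hTrepr]
  have hTle1 : ∀ᵐ y ∂(gammaMeasure (mSA:ℝ) βSA), ENNReal.ofReal (T y) ≤ 1 := by
    filter_upwards [haeY'] with y hy
    have hz : 0 ≤ βAS * (c/y) := by positivity
    have hb : T y ≤ 1 := by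
      rw [hTrepr]
      calc Real.exp (-(βAS*(c/y))) * ∑ i ∈ Finset.range (kA+1), (βAS*(c/y))^i / (i.factorial : ℝ)
          ≤ Real.exp (-(βAS*(c/y))) * Real.exp (βAS*(c/y)) :=
            mul_le_mul_of_nonneg_left (Real.sum_le_exp_of_nonneg hz (kA+1)) (Real.exp_pos _).le
        _ = 1 := by rw [← Real.exp_add]; simp
    exact ENNReal.ofReal_le_one.mpr hb
  have hmu : ∀ i, Measurable (u i) := by
    intro i
    simp only [hu]
    exact (((measurable_const.div measurable_id).const_mul βAS).neg.exp).mul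
      ((((measurable_const.div measurable_id).const_mul βAS).pow_const i).div_const _)
  have hmT : Measurable T := by
    simp only [hT]
    exact Finset.measurable_sum _ fun i _ => hmu i
  have hTnn : 0 ≤ᵐ[gammaMeasure (mSA:ℝ) βSA] T := by
    filter_upwards [haeY'] with y hy
    have hz : 0 ≤ βAS * (c/y) := by positivity
    simp only [hT, hu, Pi.zero_apply]
    exact Finset.sum_nonneg fun i _ =>
      mul_nonneg (Real.exp_pos _).le (div_nonneg (pow_nonneg hz i) (Nat.cast_nonneg _))
  have hub : ∀ i, ∀ᵐ y ∂(gammaMeasure (mSA:ℝ) βSA), ‖u i y‖ ≤ 1 := by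
    intro i
    filter_upwards [haeY'] with y hy
    have hz : 0 ≤ βAS * (c/y) := by positivity
    have h0 : 0 ≤ u i y :=
      mul_nonneg (Real.exp_pos _).le (div_nonneg (pow_nonneg hz i) (Nat.cast_nonneg _))
    rw [Real.norm_eq_abs, abs_of_nonneg h0]
    simp only [hu]
    calc Real.exp (-(βAS*(c/y))) * ((βAS*(c/y))^i / (i.factorial : ℝ))
        ≤ Real.exp (-(βAS*(c/y))) * Real.exp (βAS*(c/y)) :=
          mul_le_mul_of_nonneg_left (Real.pow_div_factorial_le_exp _ hz i) (Real.exp_pos _).le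
      _ = 1 := by rw [← Real.exp_add]; simp
  have hui : ∀ i, Integrable (u i) (gammaMeasure (mSA:ℝ) βSA) := fun i =>
    (integrable_const 1).mono' (hmu i).aestronglyMeasurable (hub i)
  have hTi : Integrable T (gammaMeasure (mSA:ℝ) βSA) := by
    simp only [hT]
    exact integrable_finset_sum _ fun i _ => hui i
  have hIle : ∫⁻ y, ENNReal.ofReal (T y) ∂(gammaMeasure (mSA:ℝ) βSA) ≤ 1 := by
    calc ∫⁻ y, ENNReal.ofReal (T y) ∂(gammaMeasure (mSA:ℝ) βSA)
        ≤ ∫⁻ _, 1 ∂(gammaMeasure (mSA:ℝ) βSA) := lintegral_mono_ae hTle1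
      _ = 1 := by simp
  have hIeq : ∫⁻ y, ENNReal.ofReal (T y) ∂(gammaMeasure (mSA:ℝ) βSA)
      = ENNReal.ofReal (∫ y, T y ∂(gammaMeasure (mSA:ℝ) βSA)) :=
    (ofReal_integral_eq_lintegral_ofReal hTi hTnn).symm
  rw [lintegral_congr_ae key,
    lintegral_sub hmT.ennreal_ofReal (hIle.trans_lt ENNReal.one_lt_top).ne hTle1,
    lintegral_one, measure_univ, hIeq,
    ENNReal.toReal_sub_of_le (hIeq ▸ hIle) ENNReal.one_ne_top, ENNReal.toReal_one,
    ENNReal.toReal_ofReal (integral_nonneg_of_ae hTnn)]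
  congr 1
  -- representation of ν as a density
  have hν_eq : gammaMeasure (mSA:ℝ) βSA
      = volume.withDensity (fun y => ((gammaPDFReal (mSA:ℝ) βSA y).toNNReal : ℝ≥0∞)) := rfl
  have hzero : ∀ᵐ (y : ℝ), y ≠ 0 := by
    rw [ae_iff]
    simp only [not_not]
    rw [show {y : ℝ | y = 0} = {0} by ext y; simp]
    simp
  have hterm : ∀ i : ℕ, ∫ y, u i y ∂(gammaMeasure (mSA:ℝ) βSA)
      = ((βAS * υ1 / μ1) ^ i / (i.factorial : ℝ)) * (βSA ^ mSA / Real.Gamma mSA) *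
        ∫ y in Ioi (0:ℝ), y ^ ((mSA:ℝ) - i - 1) * Real.exp (-(βAS * υ1) / (μ1 * y) - βSA * y) := by
    intro i
    rw [hν_eq, integral_withDensity_eq_integral_smul (measurable_gammaPDFReal _ _).real_toNNReal]
    have hsm : (fun y => (gammaPDFReal (mSA:ℝ) βSA y).toNNReal • u i y)
        = fun y => gammaPDFReal (mSA:ℝ) βSA y * u i y := by
      funext y
      rw [NNReal.smul_def, Real.coe_toNNReal _ (gammaPDFReal_nonneg (Nat.cast_pos.mpr hmSA) hβSA y), smul_eq_mul]
    rw [hsm]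
    have hres : ∫ y, gammaPDFReal (mSA:ℝ) βSA y * u i y
        = ∫ y in Ioi (0:ℝ), gammaPDFReal (mSA:ℝ) βSA y * u i y := by
      rw [← integral_indicator measurableSet_Ioi]
      apply integral_congr_ae
      filter_upwards [hzero] with y hy
      rcases lt_or_gt_of_ne hy with h | h
      · rw [Set.indicator_of_notMem (by simpa using not_lt.mpr h.le)]
        simp [gammaPDFReal, not_le.mpr h]
      · rw [Set.indicator_of_mem (by simpa using h)]
    rw [hres, setIntegral_congr_fun measurableSet_Ioi
      (fun y hy => by
        simp only [hu, hc]
        exact htt_alg mSA i βAS βSA μ1 υ1 hμ1 (by simpa using hy)),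
      integral_const_mul]
  rw [hT, integral_finset_sum _ fun i _ => hui i]
  exact Finset.sum_congr rfl fun i _ => hterm i
end

section
/- Let X, W, U be mutually independent random variables, where X is Gamma(m_X, β_X)-distributed, W is Gamma(m_W, β_W)-distributed, and U is Gamma(m_U, β_U)-distributed for positive integers m_X, m_W, m_U and positive rates β_X, β_W, β_U. Then for all a, b > 0, P( X·W > a and X·U > b ) = (β_X^{m_X} / Γ(m_X)) · Σ_{i=0}^{m_W−1} Σ_{j=0}^{m_U−1} ((β_W a)^i / i!) · ((β_U b)^j / j!) · ∫_0^∞ y^{m_X−i−j−1} · exp( −(β_W a + β_U b)/y − β_X y ) dy. -/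
open MeasureTheory ProbabilityTheory Real
open Set Filter
open scoped ENNReal NNReal



lemma tendsto_pow_mul_exp_neg_mul (n : ℕ) {β : ℝ} (hβ : 0 < β) :
    Tendsto (fun x : ℝ => x ^ n * Real.exp (-(β * x))) atTop (nhds 0) := by
  have h := tendsto_rpow_mul_exp_neg_mul_atTop_nhds_zero n β hβ
  refine h.congr' ?_
  filter_upwards [eventually_ge_atTop (0:ℝ)] with x hx
  rw [rpow_natCast, neg_mul]

lemma integrableOn_pow_mul_exp_neg_mul (n : ℕ) {β : ℝ} (hβ : 0 < β) (t : ℝ) :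
    IntegrableOn (fun x : ℝ => x ^ n * Real.exp (-(β * x))) (Set.Ioi t) := by
  apply integrable_of_isBigO_exp_neg (b := β/2) (half_pos hβ)
  · exact ((continuous_pow n).mul (continuous_exp.comp (continuous_const.mul continuous_id).neg)).continuousOn
  · rw [Asymptotics.isBigO_iff]
    refine ⟨1, ?_⟩
    have h := tendsto_pow_mul_exp_neg_mul n (half_pos hβ)
    have h2 := h.eventually (eventually_le_nhds (by norm_num : (0:ℝ) < 1))
    filter_upwards [h2, eventually_ge_atTop (0:ℝ)] with x hx hx0
    have hxe : x ^ n * Real.exp (-(β * x)) = (x ^ n * Real.exp (-(β/2 * x))) * Real.exp (-(β/2) * x) := by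
      rw [mul_assoc, ← Real.exp_add]; ring_nf
    rw [Real.norm_eq_abs, Real.norm_eq_abs, hxe, abs_mul]
    have : |x ^ n * Real.exp (-(β / 2 * x))| ≤ 1 := by
      rw [abs_of_nonneg (by positivity)]
      exact hx
    calc |x ^ n * Real.exp (-(β/2 * x))| * |Real.exp (-(β/2) * x)|
        ≤ 1 * |Real.exp (-(β/2) * x)| := by gcongr
      _ = 1 * |Real.exp (-(β/2) * x)| := rfl







lemma exp_step (n : ℕ) {β : ℝ} (hβ : 0 < β) (t : ℝ) :
    ∫ x in Set.Ioi t, x ^ (n+1) * Real.exp (-(β * x))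
      = t ^ (n+1) * Real.exp (-(β * t)) / β
        + ((n+1) / β) * ∫ x in Set.Ioi t, x ^ n * Real.exp (-(β * x)) := by
  set f : ℝ → ℝ := fun x => -(x ^ (n+1) * Real.exp (-(β * x))) / β with hf
  set f' : ℝ → ℝ := fun x => x ^ (n+1) * Real.exp (-(β * x))
      - ((n+1) / β) * (x ^ n * Real.exp (-(β * x))) with hf'
  have hderiv : ∀ x ∈ Set.Ioi t, HasDerivAt f (f' x) x := by
    intro x _
    have h1 : HasDerivAt (fun y : ℝ => y ^ (n+1)) ((n+1 : ℕ) * x ^ n) x := by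
      simpa using hasDerivAt_pow (n+1) x
    have h2 : HasDerivAt (fun y : ℝ => Real.exp (-(β * y))) (-β * Real.exp (-(β * x))) x := by
      have h3 : HasDerivAt (fun y : ℝ => -(β * y)) (-β) x := by
        simpa [Pi.neg_def] using ((hasDerivAt_id x).const_mul β).neg
      simpa [mul_comm] using h3.exp
    have := ((h1.mul h2).neg).div_const β
    refine this.congr_deriv ?_
    rw [hf']
    field_simp
    push_cast
    ring
  have hcont : ContinuousWithinAt f (Set.Ici t) t := by
    apply Continuous.continuousWithinAt
    continuity
  have hint : IntegrableOn f' (Set.Ioi t) :=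
    (integrableOn_pow_mul_exp_neg_mul (n+1) hβ t).sub
      ((integrableOn_pow_mul_exp_neg_mul n hβ t).const_mul _)
  have htend : Tendsto f atTop (nhds 0) := by
    have := ((tendsto_pow_mul_exp_neg_mul (n+1) hβ).neg).div_const β
    simpa using this
  have key := integral_Ioi_of_hasDerivAt_of_tendsto hcont hderiv hint htend
  have hsub : ∫ x in Set.Ioi t, f' x
      = (∫ x in Set.Ioi t, x ^ (n+1) * Real.exp (-(β * x)))
        - ((n+1) / β) * ∫ x in Set.Ioi t, x ^ n * Real.exp (-(β * x)) := by
    rw [hf']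
    rw [integral_sub (integrableOn_pow_mul_exp_neg_mul (n+1) hβ t)
      ((integrableOn_pow_mul_exp_neg_mul n hβ t).const_mul _), integral_const_mul]
  rw [hsub] at key
  rw [hf] at key
  simp only [neg_div, zero_sub, neg_neg] at key
  linarith [key]

lemma integral_pow_mul_exp_neg_mul (n : ℕ) {β : ℝ} (hβ : 0 < β) (t : ℝ) :
    ∫ x in Set.Ioi t, x ^ n * Real.exp (-(β * x))
      = (n.factorial * Real.exp (-(β * t)) / β ^ (n+1))
        * ∑ i ∈ Finset.range (n+1), (β*t)^i / i.factorial := by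
  induction n with
  | zero =>
      have hderiv : ∀ x ∈ Set.Ioi t,
          HasDerivAt (fun y : ℝ => -Real.exp (-(β * y)) / β) (Real.exp (-(β * x))) x := by
        intro x _
        have h3 : HasDerivAt (fun y : ℝ => -(β * y)) (-β) x := by
          simpa [Pi.neg_def] using ((hasDerivAt_id x).const_mul β).neg
        have := (h3.exp.neg).div_const β
        refine this.congr_deriv ?_
        field_simp
      have hcont : ContinuousWithinAt (fun y : ℝ => -Real.exp (-(β * y)) / β) (Set.Ici t) t := by
        apply Continuous.continuousWithinAt
        continuity
      have hint : IntegrableOn (fun x : ℝ => Real.exp (-(β * x))) (Set.Ioi t) := by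
        simpa using integrableOn_pow_mul_exp_neg_mul 0 hβ t
      have htend : Tendsto (fun y : ℝ => -Real.exp (-(β * y)) / β) atTop (nhds 0) := by
        have := ((tendsto_pow_mul_exp_neg_mul 0 hβ).neg).div_const β
        simpa using this
      have key := integral_Ioi_of_hasDerivAt_of_tendsto hcont hderiv hint htend
      simp only [zero_sub, neg_div, neg_neg] at key
      simp only [pow_zero, one_mul, Nat.factorial_zero, Finset.sum_range_one, Nat.cast_one]
      rw [key]
      field_simp
      simp
  | succ n ih =>
      rw [exp_step n hβ t, ih]
      conv_rhs => rw [Finset.sum_range_succ]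
      set S := ∑ i ∈ Finset.range (n+1), (β*t)^i / (i.factorial : ℝ) with hS
      have hfac : ((n+1).factorial : ℝ) = (n+1) * n.factorial := by
        push_cast [Nat.factorial_succ]; ring
      have hβ' : (β : ℝ) ≠ 0 := hβ.ne'
      have hfacn : (n.factorial : ℝ) ≠ 0 := by positivity
      field_simp [hfac]
      rw [hfac]
      clear_value S
      ring







lemma gamma_survival {m : ℕ} (hm : 0 < m) {β t : ℝ} (hβ : 0 < β) (ht : 0 < t) :
    gammaMeasure m β (Set.Ioi t)
      = ENNReal.ofReal (Real.exp (-(β*t)) * ∑ i ∈ Finset.range m, (β*t)^i / i.factorial) := by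
  rw [gammaMeasure, withDensity_apply _ measurableSet_Ioi]
  have hcongr : ∀ x ∈ Set.Ioi t, gammaPDF m β x
      = ENNReal.ofReal (β ^ m / Real.Gamma m * (x ^ (m-1) * Real.exp (-(β * x)))) := by
    intro x hx
    have hx0 : (0:ℝ) < x := ht.trans hx
    rw [gammaPDF_of_nonneg hx0.le]
    congr 1
    have hrw : x ^ ((m:ℝ) - 1) = x ^ (m - 1) := by
      rw [show ((m:ℝ) - 1) = ((m - 1 : ℕ) : ℝ) by
        push_cast [Nat.cast_sub hm]; ring]
      exact rpow_natCast x (m-1)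
    have hrw2 : β ^ (m:ℝ) = β ^ m := rpow_natCast β m
    rw [hrw, hrw2]
    ring
  rw [setLIntegral_congr_fun_ae measurableSet_Ioi (ae_of_all _ hcongr)]
  have hint : Integrable (fun x : ℝ => β ^ m / Real.Gamma m * (x ^ (m-1) * Real.exp (-(β * x))))
      (volume.restrict (Set.Ioi t)) :=
    ((integrableOn_pow_mul_exp_neg_mul (m-1) hβ t).const_mul _)
  have hnn : 0 ≤ᵐ[volume.restrict (Set.Ioi t)]
      fun x : ℝ => β ^ m / Real.Gamma m * (x ^ (m-1) * Real.exp (-(β * x))) := by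
    rw [EventuallyLE, ae_restrict_iff' measurableSet_Ioi]
    refine ae_of_all _ fun x hx => ?_
    have hx0 : (0:ℝ) < x := ht.trans hx
    have : 0 < Real.Gamma m := Real.Gamma_pos_of_pos (by exact_mod_cast hm)
    positivity
  rw [← ofReal_integral_eq_lintegral_ofReal hint hnn]
  congr 1
  rw [integral_const_mul, integral_pow_mul_exp_neg_mul (m-1) hβ t]
  have hΓ : Real.Gamma m = (m-1).factorial := by
    rw [show (m:ℝ) = ((m - 1 : ℕ) : ℝ) + 1 by push_cast [Nat.cast_sub hm]; ring]
    exact Real.Gamma_nat_eq_factorial (m-1)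
  have hm1 : m - 1 + 1 = m := Nat.succ_pred_eq_of_pos hm
  rw [hΓ, hm1]
  have h1 : ((m-1).factorial : ℝ) ≠ 0 := by positivity
  have h2 : (β : ℝ) ^ m ≠ 0 := by positivity
  field_simp





lemma pdf_expand (mX mW mU : ℕ) {βX βW βU a b x : ℝ} (hx : 0 < x)
    (hΓ : 0 < Real.Gamma mX) :
    (βX^mX / Real.Gamma mX) * (x ^ ((mX:ℝ)-1) * Real.exp (-(βX*x))) *
      ((Real.exp (-(βW*(a/x))) * ∑ i ∈ Finset.range mW, (βW*(a/x))^i / i.factorial) *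
       (Real.exp (-(βU*(b/x))) * ∑ j ∈ Finset.range mU, (βU*(b/x))^j / j.factorial))
    = ∑ i ∈ Finset.range mW, ∑ j ∈ Finset.range mU,
        (βX^mX / Real.Gamma mX * ((βW*a)^i / i.factorial) * ((βU*b)^j / j.factorial))
          * (x ^ ((mX:ℝ) - i - j - 1) * Real.exp (-(βW*a + βU*b)/x - βX*x)) := by
  have hxne : x ≠ 0 := hx.ne'
  have hexp : Real.exp (-(βX*x)) * (Real.exp (-(βW*(a/x))) * Real.exp (-(βU*(b/x))))
      = Real.exp (-(βW*a + βU*b)/x - βX*x) := by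
    rw [← Real.exp_add, ← Real.exp_add]
    congr 1
    field_simp
    ring
  rw [Finset.mul_sum, Finset.mul_sum, Finset.sum_mul_sum]
  have key : ∀ i ∈ Finset.range mW, ∀ j ∈ Finset.range mU,
      (βX^mX / Real.Gamma mX) * (x ^ ((mX:ℝ)-1) * Real.exp (-(βX*x))) *
        ((Real.exp (-(βW*(a/x))) * ((βW*(a/x))^i / i.factorial)) *
         (Real.exp (-(βU*(b/x))) * ((βU*(b/x))^j / j.factorial)))
      = (βX^mX / Real.Gamma mX * ((βW*a)^i / i.factorial) * ((βU*b)^j / j.factorial))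
          * (x ^ ((mX:ℝ) - i - j - 1) * Real.exp (-(βW*a + βU*b)/x - βX*x)) := by
    intro i _ j _
    have hpow : x ^ ((mX:ℝ)-1) * ((βW*(a/x))^i * (βU*(b/x))^j)
        = (βW*a)^i * (βU*b)^j * x ^ ((mX:ℝ) - i - j - 1) := by
      have h1 : (βW*(a/x))^i = (βW*a)^i / x^i := by
        rw [← mul_div_assoc, div_pow]
      have h2 : (βU*(b/x))^j = (βU*b)^j / x^j := by
        rw [← mul_div_assoc, div_pow]
      rw [h1, h2]
      have h3 : x ^ ((mX:ℝ) - i - j - 1)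
          = x ^ ((mX:ℝ)-1) / (x^i * x^j) := by
        rw [← rpow_natCast x i, ← rpow_natCast x j, ← rpow_add hx,
          ← rpow_sub hx]
        congr 1
        ring
      rw [h3]
      field_simp
    calc (βX^mX / Real.Gamma mX) * (x ^ ((mX:ℝ)-1) * Real.exp (-(βX*x))) *
        ((Real.exp (-(βW*(a/x))) * ((βW*(a/x))^i / i.factorial)) *
         (Real.exp (-(βU*(b/x))) * ((βU*(b/x))^j / j.factorial)))
        = (βX^mX / Real.Gamma mX) * ((1:ℝ)/i.factorial) * ((1:ℝ)/j.factorial) *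
            (x ^ ((mX:ℝ)-1) * ((βW*(a/x))^i * (βU*(b/x))^j)) *
            (Real.exp (-(βX*x)) * (Real.exp (-(βW*(a/x))) * Real.exp (-(βU*(b/x))))) := by
          ring
      _ = _ := by
          rw [hpow, hexp]
          ring
  calc (βX^mX / Real.Gamma mX) * (x ^ ((mX:ℝ)-1) * Real.exp (-(βX*x))) *
      (∑ i ∈ Finset.range mW, ∑ j ∈ Finset.range mU,
        (Real.exp (-(βW*(a/x))) * ((βW*(a/x))^i / i.factorial)) *
        (Real.exp (-(βU*(b/x))) * ((βU*(b/x))^j / j.factorial)))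
      = ∑ i ∈ Finset.range mW, ∑ j ∈ Finset.range mU,
          (βX^mX / Real.Gamma mX) * (x ^ ((mX:ℝ)-1) * Real.exp (-(βX*x))) *
            ((Real.exp (-(βW*(a/x))) * ((βW*(a/x))^i / i.factorial)) *
             (Real.exp (-(βU*(b/x))) * ((βU*(b/x))^j / j.factorial))) := by
        rw [Finset.mul_sum]
        refine Finset.sum_congr rfl fun i _ => ?_
        rw [Finset.mul_sum]
    _ = _ := Finset.sum_congr rfl fun i hi => Finset.sum_congr rfl fun j hj => key i hi j hj

/-- Evaluation of the term `I_2` in Appendix A: for mutually independent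
`X ~ Gamma(m_X, β_X)`, `W ~ Gamma(m_W, β_W)`, `U ~ Gamma(m_U, β_U)` and `a, b > 0`,
`P(X·W > a, X·U > b) = (β_X^{m_X}/Γ(m_X)) Σ_{i=0}^{m_W−1} Σ_{j=0}^{m_U−1}
  ((β_W a)^i/i!)((β_U b)^j/j!) ∫_0^∞ y^{m_X−i−j−1} exp(−(β_W a + β_U b)/y − β_X y) dy`. -/
theorem gamma_joint_survival_probability
    {Ω : Type*} [MeasurableSpace Ω] (P : Measure Ω) [IsProbabilityMeasure P]
    (mX mW mU : ℕ) (hmX : 0 < mX) (hmW : 0 < mW) (hmU : 0 < mU)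
    (βX βW βU : ℝ) (hβX : 0 < βX) (hβW : 0 < βW) (hβU : 0 < βU)
    (X W U : Ω → ℝ) (hX : Measurable X) (hW : Measurable W) (hU : Measurable U)
    (hXd : Measure.map X P = gammaMeasure mX βX)
    (hWd : Measure.map W P = gammaMeasure mW βW)
    (hUd : Measure.map U P = gammaMeasure mU βU)
    (hInd : iIndepFun ![X, W, U] P)
    (a b : ℝ) (ha : 0 < a) (hb : 0 < b) :
    (P {ω | a < X ω * W ω ∧ b < X ω * U ω}).toReal =
      (βX ^ mX / Real.Gamma mX) *
        ∑ i ∈ Finset.range mW, ∑ j ∈ Finset.range mU,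
          ((βW * a) ^ i / (Nat.factorial i)) * ((βU * b) ^ j / (Nat.factorial j)) *
            ∫ y in Set.Ioi (0 : ℝ),
              y ^ ((mX : ℝ) - i - j - 1) *
                Real.exp (-(βW * a + βU * b) / y - βX * y) := by
  have hmXR : (0:ℝ) < mX := by exact_mod_cast hmX
  have hmWR : (0:ℝ) < mW := by exact_mod_cast hmW
  have hmUR : (0:ℝ) < mU := by exact_mod_cast hmU
  have hΓ : 0 < Real.Gamma mX := Real.Gamma_pos_of_pos hmXR
  haveI iX : IsProbabilityMeasure (gammaMeasure mX βX) := isProbabilityMeasure_gammaMeasure hmXR hβX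
  haveI iW : IsProbabilityMeasure (gammaMeasure mW βW) := isProbabilityMeasure_gammaMeasure hmWR hβW
  haveI iU : IsProbabilityMeasure (gammaMeasure mU βU) := isProbabilityMeasure_gammaMeasure hmUR hβU
  -- independence and joint law
  have hmeas : ∀ i, Measurable (![X, W, U] i) := by
    intro i
    fin_cases i
    · exact hX
    · exact hW
    · exact hU
  have hWU : IndepFun W U P := by
    have := hInd.indepFun (show (1:Fin 3) ≠ 2 by decide)
    simpa using this
  have hXpair : IndepFun X (fun ω => (W ω, U ω)) P := by
    have := (hInd.indepFun_prodMk hmeas 1 2 0 (by decide) (by decide)).symm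
    simpa using this
  have hmapWU : P.map (fun ω => (W ω, U ω)) = (gammaMeasure mW βW).prod (gammaMeasure mU βU) := by
    rw [(indepFun_iff_map_prod_eq_prod_map_map hW.aemeasurable hU.aemeasurable).mp hWU, hWd, hUd]
  have hmapT : P.map (fun ω => (X ω, (W ω, U ω)))
      = (gammaMeasure mX βX).prod ((gammaMeasure mW βW).prod (gammaMeasure mU βU)) := by
    rw [(indepFun_iff_map_prod_eq_prod_map_map hX.aemeasurable
      (hW.prodMk hU).aemeasurable).mp hXpair, hXd, hmapWU]
  -- event
  set S : Set (ℝ × ℝ × ℝ) := {p | a < p.1 * p.2.1 ∧ b < p.1 * p.2.2} with hS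
  have hSmeas : MeasurableSet S := by
    apply MeasurableSet.inter
    · exact measurableSet_lt measurable_const (measurable_fst.mul (measurable_fst.comp measurable_snd))
    · exact measurableSet_lt measurable_const (measurable_fst.mul (measurable_snd.comp measurable_snd))
  have hPeq : P {ω | a < X ω * W ω ∧ b < X ω * U ω}
      = ((gammaMeasure mX βX).prod ((gammaMeasure mW βW).prod (gammaMeasure mU βU))) S := by
    rw [← hmapT, Measure.map_apply (hX.prodMk (hW.prodMk hU)) hSmeas]
    rfl
  -- survival functions
  set FW : ℝ → ℝ := fun t => Real.exp (-(βW*t)) * ∑ i ∈ Finset.range mW, (βW*t)^i / i.factorial with hFW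
  set FU : ℝ → ℝ := fun t => Real.exp (-(βU*t)) * ∑ j ∈ Finset.range mU, (βU*t)^j / j.factorial with hFU
  have hFWmeas : Measurable FW := by
    apply Measurable.mul
    · exact ((measurable_const.mul measurable_id).neg).exp
    · exact Finset.measurable_sum _ fun i _ =>
        ((measurable_const.mul measurable_id).pow_const i).div_const _
  have hFUmeas : Measurable FU := by
    apply Measurable.mul
    · exact ((measurable_const.mul measurable_id).neg).exp
    · exact Finset.measurable_sum _ fun i _ =>
        ((measurable_const.mul measurable_id).pow_const i).div_const _
  set g : ℝ → ℝ≥0∞ := fun x => ENNReal.ofReal (FW (a/x)) * ENNReal.ofReal (FU (b/x)) with hg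
  have hgmeas : Measurable g := by
    apply Measurable.fun_mul
    · exact (hFWmeas.comp (measurable_const.div measurable_id)).ennreal_ofReal
    · exact (hFUmeas.comp (measurable_const.div measurable_id)).ennreal_ofReal
  -- slices
  have hslice : ∀ x : ℝ, 0 < x →
      ((gammaMeasure mW βW).prod (gammaMeasure mU βU)) (Prod.mk x ⁻¹' S) = g x := by
    intro x hx
    have hset : (Prod.mk x ⁻¹' S) = Set.Ioi (a/x) ×ˢ Set.Ioi (b/x) := by
      ext q
      simp only [hS, Set.mem_preimage, Set.mem_setOf_eq, Set.mem_prod, Set.mem_Ioi]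
      constructor
      · rintro ⟨h1, h2⟩
        exact ⟨(div_lt_iff₀ hx).mpr (by linarith [mul_comm x q.1]),
               (div_lt_iff₀ hx).mpr (by linarith [mul_comm x q.2])⟩
      · rintro ⟨h1, h2⟩
        constructor
        · have := (div_lt_iff₀ hx).mp h1; linarith [mul_comm q.1 x]
        · have := (div_lt_iff₀ hx).mp h2; linarith [mul_comm q.2 x]
    rw [hset, Measure.prod_prod, gamma_survival hmW hβW (div_pos ha hx),
      gamma_survival hmU hβU (div_pos hb hx)]
  -- ae positivity
  have hae : ∀ᵐ x ∂(gammaMeasure mX βX), 0 < x := by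
    rw [ae_iff]
    have hset : {x : ℝ | ¬ 0 < x} = Set.Iic 0 := by ext x; simp [not_lt]
    rw [hset, gammaMeasure, withDensity_apply _ measurableSet_Iic]
    rw [setLIntegral_congr (Iio_ae_eq_Iic (a := (0:ℝ))).symm]
    exact lintegral_gammaPDF_of_nonpos le_rfl
  -- main computation
  have hP2 : P {ω | a < X ω * W ω ∧ b < X ω * U ω} = ∫⁻ x, g x ∂(gammaMeasure mX βX) := by
    rw [hPeq, Measure.prod_apply hSmeas]
    exact lintegral_congr_ae (hae.mono fun x hx => hslice x hx)
  have hpdfmeas : Measurable (gammaPDF (mX:ℝ) βX) := (measurable_gammaPDFReal _ _).ennreal_ofReal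
  -- coefficients and integrands
  set K : ℕ → ℕ → ℝ := fun i j =>
    βX^mX / Real.Gamma mX * ((βW*a)^i / i.factorial) * ((βU*b)^j / j.factorial) with hK
  set Jf : ℕ → ℕ → ℝ → ℝ := fun i j y =>
    y ^ ((mX:ℝ) - i - j - 1) * Real.exp (-(βW*a + βU*b)/y - βX*y) with hJf
  have hKnn : ∀ i j : ℕ, 0 ≤ K i j := by
    intro i j
    have h1 : (0:ℝ) ≤ (βW*a)^i := by positivity
    have h2 : (0:ℝ) ≤ (βU*b)^j := by positivity
    have h3 : (0:ℝ) ≤ βX^mX := by positivity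
    rw [hK]
    positivity
  have hJmeas : ∀ i j : ℕ, Measurable (Jf i j) := by
    intro i j
    rw [hJf]
    fun_prop
  have hJnn : ∀ i j : ℕ, ∀ y ∈ Set.Ioi (0:ℝ), 0 ≤ Jf i j y := by
    intro i j y hy
    have hy0 : (0:ℝ) < y := hy
    rw [hJf]
    positivity
  -- pointwise expansion on Ioi 0
  have hpoint : ∀ x ∈ Set.Ioi (0:ℝ), (gammaPDF (mX:ℝ) βX * g) x
      = ∑ i ∈ Finset.range mW, ∑ j ∈ Finset.range mU, ENNReal.ofReal (K i j * Jf i j x) := by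
    intro x hx
    have hx0 : (0:ℝ) < x := hx
    have hpdfr : gammaPDF (mX:ℝ) βX x
        = ENNReal.ofReal (βX^mX / Real.Gamma mX * (x ^ ((mX:ℝ)-1) * Real.exp (-(βX*x)))) := by
      rw [gammaPDF_of_nonneg hx0.le, rpow_natCast]
      ring_nf
    have hFWnn : 0 ≤ FW (a/x) := by
      rw [hFW]
      have : (0:ℝ) ≤ ∑ i ∈ Finset.range mW, (βW*(a/x))^i / i.factorial := by
        apply Finset.sum_nonneg
        intro i _
        have : (0:ℝ) ≤ (βW*(a/x))^i := by positivity
        positivity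
      positivity
    have hFUnn : 0 ≤ FU (b/x) := by
      rw [hFU]
      have : (0:ℝ) ≤ ∑ j ∈ Finset.range mU, (βU*(b/x))^j / j.factorial := by
        apply Finset.sum_nonneg
        intro j _
        have : (0:ℝ) ≤ (βU*(b/x))^j := by positivity
        positivity
      positivity
    have hpdfnn : (0:ℝ) ≤ βX^mX / Real.Gamma mX * (x ^ ((mX:ℝ)-1) * Real.exp (-(βX*x))) := by
      have : (0:ℝ) ≤ x ^ ((mX:ℝ)-1) := rpow_nonneg hx0.le _
      positivity
    calc (gammaPDF (mX:ℝ) βX * g) x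
        = ENNReal.ofReal ((βX^mX / Real.Gamma mX * (x ^ ((mX:ℝ)-1) * Real.exp (-(βX*x))))
            * (FW (a/x) * FU (b/x))) := by
          rw [Pi.mul_apply, hpdfr, hg]
          rw [ENNReal.ofReal_mul hpdfnn, ENNReal.ofReal_mul hFWnn]
      _ = ENNReal.ofReal (∑ i ∈ Finset.range mW, ∑ j ∈ Finset.range mU, K i j * Jf i j x) := by
          congr 1
          have := pdf_expand mX mW mU (βX := βX) (βW := βW) (βU := βU) (a := a) (b := b) hx0 hΓ
          rw [hFW, hFU, hK, hJf]
          simp only []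
          rw [← this]
      _ = ∑ i ∈ Finset.range mW, ∑ j ∈ Finset.range mU, ENNReal.ofReal (K i j * Jf i j x) := by
          rw [ENNReal.ofReal_sum_of_nonneg (fun i _ => Finset.sum_nonneg
            (fun j _ => mul_nonneg (hKnn i j) (hJnn i j x hx)))]
          exact Finset.sum_congr rfl fun i _ => ENNReal.ofReal_sum_of_nonneg
            (fun j _ => mul_nonneg (hKnn i j) (hJnn i j x hx))
  have hterm : ∀ i j : ℕ, ∫⁻ x in Set.Ioi (0:ℝ), ENNReal.ofReal (K i j * Jf i j x)
      = ENNReal.ofReal (K i j) * ∫⁻ x in Set.Ioi (0:ℝ), ENNReal.ofReal (Jf i j x) := by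
    intro i j
    rw [← lintegral_const_mul _ ((hJmeas i j).ennreal_ofReal)]
    apply lintegral_congr
    intro x
    rw [ENNReal.ofReal_mul (hKnn i j)]
  have hchain : P {ω | a < X ω * W ω ∧ b < X ω * U ω}
      = ∑ i ∈ Finset.range mW, ∑ j ∈ Finset.range mU,
          ENNReal.ofReal (K i j) * ∫⁻ x in Set.Ioi (0:ℝ), ENNReal.ofReal (Jf i j x) := by
    rw [hP2, show gammaMeasure (mX:ℝ) βX = volume.withDensity (gammaPDF mX βX) from rfl,
      lintegral_withDensity_eq_lintegral_mul _ hpdfmeas hgmeas]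
    rw [← lintegral_add_compl (gammaPDF (mX:ℝ) βX * g) measurableSet_Ioi (μ := volume)]
    have hzero : ∫⁻ x in (Set.Ioi (0:ℝ))ᶜ, (gammaPDF (mX:ℝ) βX * g) x = 0 := by
      rw [compl_Ioi, setLIntegral_congr (Iio_ae_eq_Iic (a := (0:ℝ))).symm]
      rw [setLIntegral_congr_fun_ae measurableSet_Iio
        (ae_of_all _ (fun x (hx : x < 0) => by
          rw [Pi.mul_apply, gammaPDF_of_neg hx, zero_mul]))]
      simp
    rw [hzero, add_zero]
    rw [setLIntegral_congr_fun_ae measurableSet_Ioi (ae_of_all _ hpoint)]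
    rw [lintegral_finset_sum _ (fun i _ => Finset.measurable_sum _
      (fun j _ => ((hJmeas i j).const_mul _).ennreal_ofReal))]
    refine Finset.sum_congr rfl fun i _ => ?_
    rw [lintegral_finset_sum _ (fun j _ => ((hJmeas i j).const_mul _).ennreal_ofReal)]
    exact Finset.sum_congr rfl fun j _ => hterm i j
  -- finiteness
  have hfin : ∀ i ∈ Finset.range mW, ∀ j ∈ Finset.range mU,
      ENNReal.ofReal (K i j) * (∫⁻ x in Set.Ioi (0:ℝ), ENNReal.ofReal (Jf i j x)) ≠ ⊤ := by
    intro i hi j hj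
    have hle : ENNReal.ofReal (K i j) * (∫⁻ x in Set.Ioi (0:ℝ), ENNReal.ofReal (Jf i j x))
        ≤ P {ω | a < X ω * W ω ∧ b < X ω * U ω} := by
      rw [hchain]
      calc ENNReal.ofReal (K i j) * (∫⁻ x in Set.Ioi (0:ℝ), ENNReal.ofReal (Jf i j x))
          ≤ ∑ j ∈ Finset.range mU,
              ENNReal.ofReal (K i j) * ∫⁻ x in Set.Ioi (0:ℝ), ENNReal.ofReal (Jf i j x) :=
            Finset.single_le_sum (f := fun j => ENNReal.ofReal (K i j) *
              ∫⁻ x in Set.Ioi (0:ℝ), ENNReal.ofReal (Jf i j x)) (fun _ _ => zero_le) hj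
        _ ≤ _ := Finset.single_le_sum (f := fun i => ∑ j ∈ Finset.range mU,
              ENNReal.ofReal (K i j) * ∫⁻ x in Set.Ioi (0:ℝ), ENNReal.ofReal (Jf i j x))
              (fun _ _ => zero_le) hi
    exact ne_top_of_le_ne_top (measure_ne_top P _) hle
  -- integral link
  have hint_eq : ∀ i j : ℕ, ∫ y in Set.Ioi (0:ℝ), Jf i j y
      = (∫⁻ y in Set.Ioi (0:ℝ), ENNReal.ofReal (Jf i j y)).toReal := by
    intro i j
    apply integral_eq_lintegral_of_nonneg_ae
    · rw [EventuallyLE, ae_restrict_iff' measurableSet_Ioi]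
      exact ae_of_all _ fun y hy => hJnn i j y hy
    · exact (hJmeas i j).aestronglyMeasurable.restrict
  rw [hchain, ENNReal.toReal_sum (fun i hi => ENNReal.sum_ne_top.mpr (hfin i hi))]
  rw [Finset.mul_sum]
  refine Finset.sum_congr rfl fun i hi => ?_
  rw [ENNReal.toReal_sum (hfin i hi), Finset.mul_sum]
  refine Finset.sum_congr rfl fun j hj => ?_
  rw [ENNReal.toReal_mul, ENNReal.toReal_ofReal (hKnn i j), ← hint_eq i j, hK]
  ring
end

section
/- (Proposition 2, exact integral form of the approximated HTC outage probability.) Let h_AS, h_SA, h_SR, h_AR, h_RA be mutually independent random variables, Gamma(m_AS, β_AS)-, Gamma(m_SA, β_SA)-, Gamma(m_SR, β_SR)-, Gamma(m_AR, β_AR)- and Gamma(m_RA, β_RA)-distributed respectively, with integer shapes and positive rates. For positive integers m1, m2, rates β1, β2 > 0 and c > 0, write T(m1, β1; m2, β2; c) := Σ_{i=0}^{m1−1} ((β1 c)^i / i!) · (β2^{m2}/Γ(m2)) · ∫_0^∞ y^{m2−i−1} exp(−β1 c/y − β2 y) dy, and for a, b > 0 write Φ(a, b) := (β_AS^{m_AS}/Γ(m_AS))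 Σ_{i=0}^{m_SA−1} Σ_{j=0}^{m_SR−1} ((β_SA a)^i/i!)((β_SR b)^j/j!) ∫_0^∞ y^{m_AS−i−j−1} exp(−(β_SA a + β_SR b)/y − β_AS y) dy. Then for every a > 0: P( h_AS·h_SA < a and min(h_AS·h_SR, h_AR·h_RA) < a ) = 1 − T(m_AS, β_AS; m_SA, β_SA; a) − T(m_AR, β_AR; m_RA, β_RA; a) · [ T(m_SR, β_SR; m_AS, β_AS; a) − Φ(a, a) ]. -/
open MeasureTheory ProbabilityTheory Real

/-- `T(m1, β1; m2, β2; c) = Σ_{i=0}^{m1−1} ((β1 c)^i / i!) · (β2^{m2}/Γ(m2)) ·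
  ∫_0^∞ y^{m2−i−1} exp(−β1 c/y − β2 y) dy` (the survival function `S` of Proposition 1,
written via its underlying integral). -/
noncomputable def Tfun (m1 : ℕ) (β1 : ℝ) (m2 : ℕ) (β2 : ℝ) (c : ℝ) : ℝ :=
  ∑ i ∈ Finset.range m1,
    ((β1 * c) ^ i / (Nat.factorial i)) * (β2 ^ m2 / Real.Gamma m2) *
      ∫ y in Set.Ioi (0 : ℝ), y ^ ((m2 : ℝ) - i - 1) * Real.exp (-(β1 * c) / y - β2 * y)

/-- `Φ(a, b)` of Propositions 2 and 3, written via its underlying integral. -/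
noncomputable def Phi (mAS : ℕ) (βAS : ℝ) (mSA : ℕ) (βSA : ℝ) (mSR : ℕ) (βSR : ℝ)
    (a b : ℝ) : ℝ :=
  (βAS ^ mAS / Real.Gamma mAS) *
    ∑ i ∈ Finset.range mSA, ∑ j ∈ Finset.range mSR,
      ((βSA * a) ^ i / (Nat.factorial i)) * ((βSR * b) ^ j / (Nat.factorial j)) *
        ∫ y in Set.Ioi (0 : ℝ),
          y ^ ((mAS : ℝ) - i - j - 1) * Real.exp (-(βSA * a + βSR * b) / y - βAS * y)



open MeasureTheory ProbabilityTheory Real Set Filter Topology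
open scoped ENNReal NNReal

lemma erlang_deriv (β : ℝ) (m : ℕ) (hm : 0 < m) (x : ℝ) :
    HasDerivAt (fun x => Real.exp (-(β*x)) * ∑ i ∈ Finset.range m, (β*x)^i / Nat.factorial i)
      (-(β * Real.exp (-(β*x)) * (β*x)^(m-1) / Nat.factorial (m-1))) x := by
  have hexp : HasDerivAt (fun x => Real.exp (-(β*x))) (-β * Real.exp (-(β*x))) x := by
    have h1 : HasDerivAt (fun x : ℝ => -(β*x)) (-β) x := by
      simpa using ((hasDerivAt_id x).const_mul β).fun_neg
    simpa [mul_comm] using h1.exp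
  induction m with
  | zero => omega
  | succ n ih =>
    rcases Nat.eq_zero_or_pos n with hn | hn
    · subst hn
      simp only [zero_add, Finset.range_one, Finset.sum_singleton, pow_zero,
        Nat.factorial_zero, Nat.cast_one, div_one, mul_one, Nat.sub_self]
      simpa using hexp
    · have ihd := ih hn
      have hpow : HasDerivAt (fun x => (β*x)^n) ((n : ℝ) * (β*x)^(n-1) * β) x := by
        have h1 : HasDerivAt (fun x : ℝ => β*x) β x := by
          simpa using ((hasDerivAt_id x).const_mul β)
        exact h1.pow n
      have hterm : HasDerivAt (fun x => Real.exp (-(β*x)) * ((β*x)^n / Nat.factorial n))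
          (-β * Real.exp (-(β*x)) * ((β*x)^n / Nat.factorial n) +
            Real.exp (-(β*x)) * ((n : ℝ) * (β*x)^(n-1) * β / Nat.factorial n)) x :=
        hexp.mul (hpow.div_const _)
      have hsum := ihd.fun_add hterm
      have heq : (fun x => Real.exp (-(β*x)) * ∑ i ∈ Finset.range n, (β*x)^i / Nat.factorial i
            + Real.exp (-(β*x)) * ((β*x)^n / Nat.factorial n))
          = (fun x => Real.exp (-(β*x)) * ∑ i ∈ Finset.range (n+1), (β*x)^i / Nat.factorial i) := by
        funext y
        rw [Finset.sum_range_succ, mul_add]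
      rw [heq] at hsum
      refine hsum.congr_deriv ?_
      have hfac : (Nat.factorial n : ℝ) = n * Nat.factorial (n-1) := by
        rw [← Nat.succ_pred_eq_of_pos hn]
        push_cast [Nat.factorial_succ]
        ring
      have hn0 : (n : ℝ) ≠ 0 := Nat.cast_ne_zero.mpr hn.ne'
      have hf0 : (Nat.factorial (n-1) : ℝ) ≠ 0 := Nat.cast_ne_zero.mpr (Nat.factorial_ne_zero _)
      simp only [Nat.add_sub_cancel]
      rw [hfac]
      field_simp
      ring

lemma erlang_tendsto (β : ℝ) (hβ : 0 < β) (m : ℕ) :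
    Tendsto (fun x => Real.exp (-(β*x)) * ∑ i ∈ Finset.range m, (β*x)^i / Nat.factorial i)
      atTop (𝓝 0) := by
  have h : ∀ x : ℝ, Real.exp (-(β*x)) * ∑ i ∈ Finset.range m, (β*x)^i / Nat.factorial i
      = ∑ i ∈ Finset.range m, ((β*x)^i * Real.exp (-(β*x))) / Nat.factorial i := by
    intro x
    rw [Finset.mul_sum]
    congr 1; funext i; ring
  simp only [h]
  have : (0 : ℝ) = ∑ i ∈ Finset.range m, (0 : ℝ) := by simp
  rw [this]
  refine tendsto_finset_sum _ fun i _ => ?_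
  have hβx : Tendsto (fun x : ℝ => β * x) atTop atTop :=
    Tendsto.const_mul_atTop hβ tendsto_id
  have := (tendsto_pow_mul_exp_neg_atTop_nhds_zero i).comp hβx
  simpa using this.div_const (Nat.factorial i : ℝ)

lemma erlang_integral (m : ℕ) (hm : 0 < m) (β : ℝ) (hβ : 0 < β) (t : ℝ) (ht : 0 < t) :
    ∫ x in Ioi t, β^m / Real.Gamma m * x^((m:ℝ)-1) * Real.exp (-(β*x)) =
      Real.exp (-(β*t)) * ∑ i ∈ Finset.range m, (β*t)^i / Nat.factorial i := by
  set F := fun x => Real.exp (-(β*x)) * ∑ i ∈ Finset.range m, (β*x)^i / Nat.factorial i with hF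
  set g' := fun x => β * Real.exp (-(β*x)) * (β*x)^(m-1) / Nat.factorial (m-1) with hg'
  have hderiv : ∀ x ∈ Ici t, HasDerivAt (fun x => -F x) (g' x) x := by
    intro x _
    simpa using (erlang_deriv β m hm x).fun_neg
  have hpos : ∀ x ∈ Ioi t, 0 ≤ g' x := by
    intro x hx
    have hx0 : 0 < x := ht.trans hx
    have : 0 < β * x := by positivity
    simp only [hg']
    positivity
  have htend : Tendsto (fun x => -F x) atTop (𝓝 0) := by
    simpa using (erlang_tendsto β hβ m).neg
  have key := integral_Ioi_of_hasDerivAt_of_nonneg' hderiv hpos htend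
  have hcong : ∀ x ∈ Ioi t, β^m / Real.Gamma m * x^((m:ℝ)-1) * Real.exp (-(β*x)) = g' x := by
    intro x hx
    have hx0 : 0 < x := ht.trans hx
    have h1 : Real.Gamma m = Nat.factorial (m-1) := by
      rw [(by omega : m = (m-1) + 1)]
      push_cast
      rw [Real.Gamma_nat_eq_factorial]
    have h2 : x^((m:ℝ)-1) = x^(m-1 : ℕ) := by
      rw [← Real.rpow_natCast x (m-1)]
      congr 1
      push_cast [Nat.cast_sub hm]
      ring
    have h3 : β^m = β * β^(m-1) := by
      rw [(by omega : m = (m-1) + 1)]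
      ring_nf
      simp [pow_succ, mul_comm]
    rw [h1, h2, h3, hg']
    simp only [mul_pow]
    ring
  rw [setIntegral_congr_fun measurableSet_Ioi hcong, key]
  simp [hF]

lemma gamma_cast_pos (m : ℕ) (hm : 0 < m) : (0:ℝ) < (m:ℝ) := by exact_mod_cast hm

lemma gamma_Iic_zero (m β : ℝ) : gammaMeasure m β (Iic 0) = 0 := by
  rw [gammaMeasure, withDensity_apply _ measurableSet_Iic,
    setLIntegral_congr (Iio_ae_eq_Iic (a := (0:ℝ))).symm]
  exact lintegral_gammaPDF_of_nonpos le_rfl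

lemma gamma_Ioi_ae (m β : ℝ) : ∀ᵐ y ∂(gammaMeasure m β), y ∈ Ioi (0:ℝ) := by
  rw [ae_iff]
  have : {y : ℝ | ¬ y ∈ Ioi (0:ℝ)} = Iic 0 := by ext y; simp
  rw [this]
  exact gamma_Iic_zero m β

lemma gamma_Ici (m : ℕ) (hm : 0 < m) (β : ℝ) (hβ : 0 < β) (t : ℝ) (ht : 0 < t) :
    gammaMeasure m β (Ici t) = ENNReal.ofReal
      (Real.exp (-(β*t)) * ∑ i ∈ Finset.range m, (β*t)^i / Nat.factorial i) := by
  have hPM : IsProbabilityMeasure (gammaMeasure m β) :=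
    isProbabilityMeasure_gammaMeasure (gamma_cast_pos m hm) hβ
  have hfin : gammaMeasure m β (Ici t) ≠ ⊤ := measure_ne_top _ _
  have htor : (gammaMeasure m β (Ici t)).toReal = ∫ x in Ici t, gammaPDFReal m β x := by
    rw [gammaMeasure, withDensity_apply _ measurableSet_Ici]
    rw [integral_eq_lintegral_of_nonneg_ae
      (ae_of_all _ fun x => gammaPDFReal_nonneg (gamma_cast_pos m hm) hβ x)
      (measurable_gammaPDFReal m β).aestronglyMeasurable.restrict]
    rfl
  have h2 : ∫ x in Ici t, gammaPDFReal m β x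
      = ∫ x in Ioi t, β^m / Real.Gamma m * x^((m:ℝ)-1) * Real.exp (-(β*x)) := by
    rw [integral_Ici_eq_integral_Ioi]
    refine setIntegral_congr_fun measurableSet_Ioi fun x hx => ?_
    have hx0 : (0:ℝ) < x := ht.trans hx
    simp [gammaPDFReal, hx0.le]
  rw [← ENNReal.ofReal_toReal hfin, htor, h2, erlang_integral m hm β hβ t ht]

lemma gamma_slice (m : ℕ) (hm : 0 < m) (β : ℝ) (hβ : 0 < β) (c : ℝ) (hc : 0 < c)
    {y : ℝ} (hy : 0 < y) :
    gammaMeasure m β {x | c ≤ x * y} = ENNReal.ofReal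
      (Real.exp (-(β*(c/y))) * ∑ i ∈ Finset.range m, (β*(c/y))^i / Nat.factorial i) := by
  have hset : {x : ℝ | c ≤ x * y} = Ici (c/y) := by
    ext x
    simp [mem_Ici, div_le_iff₀ hy]
  rw [hset, gamma_Ici m hm β hβ _ (by positivity)]

lemma lintegral_gamma (m : ℕ) (hm : 0 < m) (β : ℝ) (hβ : 0 < β)
    (f : ℝ → ℝ≥0∞) (hf : Measurable f) :
    ∫⁻ y, f y ∂(gammaMeasure m β)
      = ∫⁻ y in Ioi 0,
          ENNReal.ofReal (β^m / Real.Gamma m * y^((m:ℝ)-1) * Real.exp (-(β*y))) * f y := by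
  rw [gammaMeasure, lintegral_withDensity_eq_lintegral_mul _
    (show Measurable (gammaPDF m β) from (measurable_gammaPDFReal m β).ennreal_ofReal) hf]
  rw [← lintegral_add_compl (fun y => (gammaPDF m β * f) y) (A := Ici (0:ℝ)) measurableSet_Ici]
  have hleft : ∫⁻ y in (Ici (0:ℝ))ᶜ, (gammaPDF m β * f) y = 0 := by
    rw [compl_Ici]
    have h0 : ∀ᵐ y ∂(volume.restrict (Iio (0:ℝ))), (gammaPDF (m:ℝ) β * f) y = 0 := by
      filter_upwards [ae_restrict_mem measurableSet_Iio] with y hy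
      simp [Pi.mul_apply, gammaPDF_of_neg hy]
    rw [lintegral_congr_ae h0, lintegral_zero]
  rw [hleft, add_zero, setLIntegral_congr (Ioi_ae_eq_Ici (a := (0:ℝ))).symm]
  refine setLIntegral_congr_fun measurableSet_Ioi (fun y hy => ?_)
  have hy0 : (0:ℝ) < y := hy
  simp [Pi.mul_apply, gammaPDF_of_nonneg hy0.le]

lemma term_real (β1 c γ β2 : ℝ) (m2 i : ℕ) {y : ℝ} (hy : 0 < y) :
    (γ * y^((m2:ℝ)-1) * Real.exp (-(β2*y)))
        * (Real.exp (-(β1*(c/y))) * ((β1*(c/y))^i / Nat.factorial i))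
      = ((β1*c)^i / Nat.factorial i) * γ
          * (y ^ ((m2:ℝ) - i - 1) * Real.exp (-(β1*c)/y - β2*y)) := by
  have hpow : y^((m2:ℝ)-i-1) = y^((m2:ℝ)-1) / y^(i:ℕ) := by
    rw [← Real.rpow_natCast y i, ← Real.rpow_sub hy]
    congr 1; ring
  have hexp : Real.exp (-(β1*c)/y - β2*y)
      = Real.exp (-(β1*(c/y))) * Real.exp (-(β2*y)) := by
    rw [← Real.exp_add]
    congr 1
    field_simp
    ring
  have h1 : β1*(c/y) = β1*c/y := by ring
  rw [hpow, hexp, h1, div_pow]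
  have hyi : (y:ℝ)^(i:ℕ) ≠ 0 := pow_ne_zero _ hy.ne'
  field_simp

lemma ti_meas (m2 i : ℕ) (β1 β2 c : ℝ) :
    Measurable (fun y : ℝ => y ^ ((m2:ℝ) - i - 1) * Real.exp (-(β1 * c) / y - β2 * y)) := by
  apply Measurable.mul
  · measurability
  · exact (((measurable_const.div measurable_id).sub (measurable_id.const_mul β2))).exp

lemma prod_survival (m1 : ℕ) (hm1 : 0 < m1) (β1 : ℝ) (hβ1 : 0 < β1)
    (m2 : ℕ) (hm2 : 0 < m2) (β2 : ℝ) (hβ2 : 0 < β2) (c : ℝ) (hc : 0 < c) :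
    (((gammaMeasure m2 β2).prod (gammaMeasure m1 β1)) {p : ℝ×ℝ | c ≤ p.2 * p.1}).toReal
      = Tfun m1 β1 m2 β2 c := by
  have hPM1 : IsProbabilityMeasure (gammaMeasure m1 β1) :=
    isProbabilityMeasure_gammaMeasure (gamma_cast_pos _ hm1) hβ1
  have hPM2 : IsProbabilityMeasure (gammaMeasure m2 β2) :=
    isProbabilityMeasure_gammaMeasure (gamma_cast_pos _ hm2) hβ2
  have hs : MeasurableSet {p : ℝ×ℝ | c ≤ p.2 * p.1} :=
    measurableSet_le measurable_const (measurable_snd.mul measurable_fst)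
  have hΓ : (0:ℝ) < Real.Gamma m2 := Real.Gamma_pos_of_pos (gamma_cast_pos _ hm2)
  set ti : ℕ → ℝ → ℝ :=
    fun i y => y ^ ((m2:ℝ) - i - 1) * Real.exp (-(β1 * c) / y - β2 * y) with hti
  set K : ℕ → ℝ := fun i => (β1*c)^i / Nat.factorial i * (β2^m2 / Real.Gamma m2) with hK
  have hKnn : ∀ i, 0 ≤ K i := by
    intro i
    have : (0:ℝ) < β1 * c := by positivity
    positivity
  have hmeasS : Measurable (fun y : ℝ => ENNReal.ofReal
      (Real.exp (-(β1*(c/y))) * ∑ i ∈ Finset.range m1, (β1*(c/y))^i / Nat.factorial i)) := by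
    apply Measurable.ennreal_ofReal
    apply Measurable.mul
    · exact (((measurable_const.div measurable_id).const_mul β1).neg).exp
    · apply Finset.measurable_sum
      intro i _
      exact (((measurable_const.div measurable_id).const_mul β1).pow_const i).div_const _
  have key : ((gammaMeasure m2 β2).prod (gammaMeasure m1 β1)) {p : ℝ×ℝ | c ≤ p.2 * p.1}
      = ∑ i ∈ Finset.range m1,
          ENNReal.ofReal (K i) * ∫⁻ y in Ioi 0, ENNReal.ofReal (ti i y) := by
    rw [Measure.prod_apply hs]
    have hae : (fun y => gammaMeasure m1 β1 (Prod.mk y ⁻¹' {p : ℝ×ℝ | c ≤ p.2 * p.1}))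
        =ᵐ[gammaMeasure (m2:ℝ) β2] fun y => ENNReal.ofReal
          (Real.exp (-(β1*(c/y))) * ∑ i ∈ Finset.range m1, (β1*(c/y))^i / Nat.factorial i) := by
      filter_upwards [gamma_Ioi_ae (m2:ℝ) β2] with y hy
      have hpre : Prod.mk y ⁻¹' {p : ℝ×ℝ | c ≤ p.2 * p.1} = {x | c ≤ x * y} := rfl
      rw [hpre, gamma_slice m1 hm1 β1 hβ1 c hc hy]
    rw [lintegral_congr_ae hae, lintegral_gamma m2 hm2 β2 hβ2 _ hmeasS]
    have hptw : ∀ y ∈ Ioi (0:ℝ),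
        ENNReal.ofReal (β2^m2 / Real.Gamma m2 * y^((m2:ℝ)-1) * Real.exp (-(β2*y)))
          * ENNReal.ofReal (Real.exp (-(β1*(c/y)))
              * ∑ i ∈ Finset.range m1, (β1*(c/y))^i / Nat.factorial i)
        = ∑ i ∈ Finset.range m1, ENNReal.ofReal (K i) * ENNReal.ofReal (ti i y) := by
      intro y hy
      have hy0 : (0:ℝ) < y := hy
      have hAnn : 0 ≤ β2^m2 / Real.Gamma m2 * y^((m2:ℝ)-1) * Real.exp (-(β2*y)) := by
        positivity
      rw [← ENNReal.ofReal_mul hAnn]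
      have hreal : β2^m2 / Real.Gamma m2 * y^((m2:ℝ)-1) * Real.exp (-(β2*y))
            * (Real.exp (-(β1*(c/y))) * ∑ i ∈ Finset.range m1, (β1*(c/y))^i / Nat.factorial i)
          = ∑ i ∈ Finset.range m1, K i * ti i y := by
        rw [Finset.mul_sum, Finset.mul_sum]
        refine Finset.sum_congr rfl fun i _ => ?_
        have := term_real β1 c (β2^m2 / Real.Gamma m2) β2 m2 i hy0
        calc β2^m2 / Real.Gamma m2 * y^((m2:ℝ)-1) * Real.exp (-(β2*y))
              * (Real.exp (-(β1*(c/y))) * ((β1*(c/y))^i / Nat.factorial i))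
            = ((β1*c)^i / Nat.factorial i) * (β2^m2 / Real.Gamma m2)
              * (y ^ ((m2:ℝ) - i - 1) * Real.exp (-(β1*c)/y - β2*y)) := by
              rw [this]
          _ = K i * ti i y := by rw [hK, hti]
      rw [hreal, ENNReal.ofReal_sum_of_nonneg]
      · refine Finset.sum_congr rfl fun i _ => ?_
        rw [ENNReal.ofReal_mul (hKnn i)]
      · intro i _
        have h1 : 0 ≤ ti i y := by
          have := Real.rpow_nonneg hy0.le ((m2:ℝ) - i - 1)
          positivity
        exact mul_nonneg (hKnn i) h1
    rw [setLIntegral_congr_fun measurableSet_Ioi hptw,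
      lintegral_finset_sum]
    · refine Finset.sum_congr rfl fun i _ => ?_
      rw [lintegral_const_mul _ ((ti_meas m2 i β1 β2 c).ennreal_ofReal)]
    · intro i _
      exact ((ti_meas m2 i β1 β2 c).ennreal_ofReal).const_mul _
  have hfin : ∀ i ∈ Finset.range m1,
      ENNReal.ofReal (K i) * (∫⁻ y in Ioi 0, ENNReal.ofReal (ti i y)) ≠ ⊤ := by
    have hne : ((gammaMeasure m2 β2).prod (gammaMeasure m1 β1)) {p : ℝ×ℝ | c ≤ p.2 * p.1} ≠ ⊤ :=
      measure_ne_top _ _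
    rw [key] at hne
    intro i hi
    exact (ENNReal.sum_lt_top.1 hne.lt_top i hi).ne
  rw [key, ENNReal.toReal_sum hfin, Tfun]
  refine Finset.sum_congr rfl fun i hi => ?_
  rw [ENNReal.toReal_mul, ENNReal.toReal_ofReal (hKnn i)]
  have hint : (∫⁻ y in Ioi 0, ENNReal.ofReal (ti i y)).toReal
      = ∫ y in Ioi (0:ℝ), ti i y := by
    rw [integral_eq_lintegral_of_nonneg_ae]
    · filter_upwards [ae_restrict_mem measurableSet_Ioi] with y hy
      have hy0 : (0:ℝ) < y := hy
      have := Real.rpow_nonneg hy0.le ((m2:ℝ) - i - 1)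
      simp only [hti, Pi.zero_apply]
      positivity
    · exact (ti_meas m2 i β1 β2 c).aestronglyMeasurable.restrict
  rw [hint, hK, hti]

lemma term_real2 (βSA βSR a γ βAS : ℝ) (mAS i j : ℕ) {x : ℝ} (hx : 0 < x) :
    (γ * x^((mAS:ℝ)-1) * Real.exp (-(βAS*x))) *
      ((Real.exp (-(βSA*(a/x))) * ((βSA*(a/x))^i / Nat.factorial i)) *
       (Real.exp (-(βSR*(a/x))) * ((βSR*(a/x))^j / Nat.factorial j)))
    = ((βSA*a)^i / Nat.factorial i) * ((βSR*a)^j / Nat.factorial j) * γ *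
        (x ^ ((mAS:ℝ) - i - j - 1) * Real.exp (-(βSA*a + βSR*a)/x - βAS*x)) := by
  have hpow : x^((mAS:ℝ)-i-j-1) = x^((mAS:ℝ)-1) / (x^(i:ℕ) * x^(j:ℕ)) := by
    rw [← pow_add, ← Real.rpow_natCast x (i+j), ← Real.rpow_sub hx]
    push_cast
    congr 1; ring
  have hexp : Real.exp (-(βSA*a + βSR*a)/x - βAS*x)
      = Real.exp (-(βSA*(a/x))) * Real.exp (-(βSR*(a/x))) * Real.exp (-(βAS*x)) := by
    rw [← Real.exp_add, ← Real.exp_add]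
    congr 1
    field_simp
    ring
  have h1 : βSA*(a/x) = βSA*a/x := by ring
  have h2 : βSR*(a/x) = βSR*a/x := by ring
  rw [hpow, hexp, h1, h2, div_pow, div_pow]
  have hxi : (x:ℝ)^(i:ℕ) ≠ 0 := pow_ne_zero _ hx.ne'
  have hxj : (x:ℝ)^(j:ℕ) ≠ 0 := pow_ne_zero _ hx.ne'
  field_simp

lemma uij_meas (mAS i j : ℕ) (βSA βSR βAS a : ℝ) :
    Measurable (fun x : ℝ =>
      x ^ ((mAS:ℝ) - i - j - 1) * Real.exp (-(βSA*a + βSR*a)/x - βAS*x)) := by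
  apply Measurable.mul
  · measurability
  · exact (((measurable_const.div measurable_id).sub (measurable_id.const_mul βAS))).exp

lemma Efun_meas (m : ℕ) (β a : ℝ) :
    Measurable (fun x : ℝ => Real.exp (-(β*(a/x)))
      * ∑ i ∈ Finset.range m, (β*(a/x))^i / Nat.factorial i) := by
  apply Measurable.mul
  · exact (((measurable_const.div measurable_id).const_mul β).neg).exp
  · apply Finset.measurable_sum
    intro i _
    exact (((measurable_const.div measurable_id).const_mul β).pow_const i).div_const _

lemma triple_survival (mAS : ℕ) (hmAS : 0 < mAS) (βAS : ℝ) (hβAS : 0 < βAS)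
    (mSA : ℕ) (hmSA : 0 < mSA) (βSA : ℝ) (hβSA : 0 < βSA)
    (mSR : ℕ) (hmSR : 0 < mSR) (βSR : ℝ) (hβSR : 0 < βSR) (a : ℝ) (ha : 0 < a) :
    (((gammaMeasure mAS βAS).prod ((gammaMeasure mSA βSA).prod (gammaMeasure mSR βSR)))
        {p : ℝ × ℝ × ℝ | a ≤ p.2.1 * p.1 ∧ a ≤ p.2.2 * p.1}).toReal
      = Phi mAS βAS mSA βSA mSR βSR a a := by
  have hPMAS : IsProbabilityMeasure (gammaMeasure mAS βAS) :=
    isProbabilityMeasure_gammaMeasure (gamma_cast_pos _ hmAS) hβAS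
  have hPMSA : IsProbabilityMeasure (gammaMeasure mSA βSA) :=
    isProbabilityMeasure_gammaMeasure (gamma_cast_pos _ hmSA) hβSA
  have hPMSR : IsProbabilityMeasure (gammaMeasure mSR βSR) :=
    isProbabilityMeasure_gammaMeasure (gamma_cast_pos _ hmSR) hβSR
  have hΓ : (0:ℝ) < Real.Gamma mAS := Real.Gamma_pos_of_pos (gamma_cast_pos _ hmAS)
  have hs : MeasurableSet {p : ℝ × ℝ × ℝ | a ≤ p.2.1 * p.1 ∧ a ≤ p.2.2 * p.1} := by
    apply MeasurableSet.inter
    · exact measurableSet_le measurable_const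
        ((measurable_snd.comp measurable_id |>.fst).mul measurable_fst)
    · exact measurableSet_le measurable_const
        ((measurable_snd.comp measurable_id |>.snd).mul measurable_fst)
  set E1 : ℝ → ℝ := fun x => Real.exp (-(βSA*(a/x)))
    * ∑ i ∈ Finset.range mSA, (βSA*(a/x))^i / Nat.factorial i with hE1
  set E2 : ℝ → ℝ := fun x => Real.exp (-(βSR*(a/x)))
    * ∑ j ∈ Finset.range mSR, (βSR*(a/x))^j / Nat.factorial j with hE2
  set u : ℕ → ℕ → ℝ → ℝ := fun i j x =>
    x ^ ((mAS:ℝ) - i - j - 1) * Real.exp (-(βSA*a + βSR*a)/x - βAS*x) with hu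
  set C : ℕ → ℕ → ℝ := fun i j =>
    ((βSA*a)^i / Nat.factorial i) * ((βSR*a)^j / Nat.factorial j)
      * (βAS^mAS / Real.Gamma mAS) with hC
  have hCnn : ∀ i j, 0 ≤ C i j := by
    intro i j
    have h1 : (0:ℝ) < βSA * a := by positivity
    have h2 : (0:ℝ) < βSR * a := by positivity
    positivity
  have hunn : ∀ i j, ∀ x : ℝ, 0 < x → 0 ≤ u i j x := by
    intro i j x hx
    have := Real.rpow_nonneg hx.le ((mAS:ℝ) - i - j - 1)
    simp only [hu]
    positivity
  have key : ((gammaMeasure mAS βAS).prod ((gammaMeasure mSA βSA).prod (gammaMeasure mSR βSR)))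
        {p : ℝ × ℝ × ℝ | a ≤ p.2.1 * p.1 ∧ a ≤ p.2.2 * p.1}
      = ∑ i ∈ Finset.range mSA, ∑ j ∈ Finset.range mSR,
          ENNReal.ofReal (C i j) * ∫⁻ x in Ioi 0, ENNReal.ofReal (u i j x) := by
    rw [Measure.prod_apply hs]
    have hae : (fun x => ((gammaMeasure mSA βSA).prod (gammaMeasure mSR βSR))
          (Prod.mk x ⁻¹' {p : ℝ × ℝ × ℝ | a ≤ p.2.1 * p.1 ∧ a ≤ p.2.2 * p.1}))
        =ᵐ[gammaMeasure (mAS:ℝ) βAS] fun x => ENNReal.ofReal (E1 x) * ENNReal.ofReal (E2 x) := by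
      filter_upwards [gamma_Ioi_ae (mAS:ℝ) βAS] with x hx
      have hpre : Prod.mk x ⁻¹' {p : ℝ × ℝ × ℝ | a ≤ p.2.1 * p.1 ∧ a ≤ p.2.2 * p.1}
          = {y : ℝ | a ≤ y * x} ×ˢ {z : ℝ | a ≤ z * x} := by
        ext q
        simp [Set.mem_prod]
      rw [hpre, Measure.prod_prod, gamma_slice mSA hmSA βSA hβSA a ha hx,
        gamma_slice mSR hmSR βSR hβSR a ha hx]
    rw [lintegral_congr_ae hae,
      lintegral_gamma mAS hmAS βAS hβAS (fun x => ENNReal.ofReal (E1 x) * ENNReal.ofReal (E2 x))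
        ((Efun_meas mSA βSA a).ennreal_ofReal.mul (Efun_meas mSR βSR a).ennreal_ofReal)]
    have hptw : ∀ x ∈ Ioi (0:ℝ),
        ENNReal.ofReal (βAS^mAS / Real.Gamma mAS * x^((mAS:ℝ)-1) * Real.exp (-(βAS*x)))
          * (ENNReal.ofReal (E1 x) * ENNReal.ofReal (E2 x))
        = ∑ i ∈ Finset.range mSA, ∑ j ∈ Finset.range mSR,
            ENNReal.ofReal (C i j) * ENNReal.ofReal (u i j x) := by
      intro x hx
      have hx0 : (0:ℝ) < x := hx
      have hAnn : 0 ≤ βAS^mAS / Real.Gamma mAS * x^((mAS:ℝ)-1) * Real.exp (-(βAS*x)) := by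
        positivity
      have hE1nn : 0 ≤ E1 x := by
        have h1 : (0:ℝ) ≤ βSA*(a/x) := by positivity
        simp only [hE1]
        positivity
      rw [← ENNReal.ofReal_mul hE1nn, ← ENNReal.ofReal_mul hAnn]
      have hreal : βAS^mAS / Real.Gamma mAS * x^((mAS:ℝ)-1) * Real.exp (-(βAS*x))
            * (E1 x * E2 x)
          = ∑ i ∈ Finset.range mSA, ∑ j ∈ Finset.range mSR, C i j * u i j x := by
        simp only [hE1, hE2, Finset.mul_sum, Finset.sum_mul]
        rw [Finset.sum_comm]
        refine Finset.sum_congr rfl fun i _ => ?_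
        refine Finset.sum_congr rfl fun j _ => ?_
        have := term_real2 βSA βSR a (βAS^mAS / Real.Gamma mAS) βAS mAS i j hx0
        calc _ = (βAS^mAS / Real.Gamma mAS * x^((mAS:ℝ)-1) * Real.exp (-(βAS*x))) *
              ((Real.exp (-(βSA*(a/x))) * ((βSA*(a/x))^i / Nat.factorial i)) *
               (Real.exp (-(βSR*(a/x))) * ((βSR*(a/x))^j / Nat.factorial j))) := by ring
          _ = C i j * u i j x := by rw [this, hC, hu]
      rw [hreal]
      rw [ENNReal.ofReal_sum_of_nonneg]
      · refine Finset.sum_congr rfl fun i _ => ?_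
        rw [ENNReal.ofReal_sum_of_nonneg]
        · refine Finset.sum_congr rfl fun j _ => ?_
          rw [ENNReal.ofReal_mul (hCnn i j)]
        · exact fun j _ => mul_nonneg (hCnn i j) (hunn i j x hx0)
      · exact fun i _ => Finset.sum_nonneg fun j _ =>
          mul_nonneg (hCnn i j) (hunn i j x hx0)
    rw [setLIntegral_congr_fun measurableSet_Ioi hptw]
    rw [lintegral_finset_sum]
    · refine Finset.sum_congr rfl fun i _ => ?_
      rw [lintegral_finset_sum]
      · refine Finset.sum_congr rfl fun j _ => ?_
        rw [lintegral_const_mul _ ((uij_meas mAS i j βSA βSR βAS a).ennreal_ofReal)]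
      · exact fun j _ => ((uij_meas mAS i j βSA βSR βAS a).ennreal_ofReal).const_mul _
    · exact fun i _ => Finset.measurable_sum _ fun j _ =>
        ((uij_meas mAS i j βSA βSR βAS a).ennreal_ofReal).const_mul _
  have hne : ((gammaMeasure mAS βAS).prod
      ((gammaMeasure mSA βSA).prod (gammaMeasure mSR βSR)))
      {p : ℝ × ℝ × ℝ | a ≤ p.2.1 * p.1 ∧ a ≤ p.2.2 * p.1} ≠ ⊤ := measure_ne_top _ _
  rw [key] at hne
  have hfin : ∀ i ∈ Finset.range mSA, ∀ j ∈ Finset.range mSR,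
      ENNReal.ofReal (C i j) * (∫⁻ x in Ioi 0, ENNReal.ofReal (u i j x)) ≠ ⊤ := by
    intro i hi j hj
    have h1 := (ENNReal.sum_lt_top.1 hne.lt_top i hi)
    exact (ENNReal.sum_lt_top.1 h1 j hj).ne
  rw [key, ENNReal.toReal_sum (fun i hi => by
    exact (ENNReal.sum_lt_top.1 hne.lt_top i hi).ne), Phi, Finset.mul_sum]
  refine Finset.sum_congr rfl fun i hi => ?_
  rw [ENNReal.toReal_sum (fun j hj => hfin i hi j hj), Finset.mul_sum]
  refine Finset.sum_congr rfl fun j hj => ?_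
  rw [ENNReal.toReal_mul, ENNReal.toReal_ofReal (hCnn i j)]
  have hint : (∫⁻ x in Ioi 0, ENNReal.ofReal (u i j x)).toReal
      = ∫ x in Ioi (0:ℝ), u i j x := by
    rw [integral_eq_lintegral_of_nonneg_ae]
    · filter_upwards [ae_restrict_mem measurableSet_Ioi] with x hx
      exact hunn i j x hx
    · exact (uij_meas mAS i j βSA βSR βAS a).aestronglyMeasurable.restrict
  rw [hint, hC, hu]
  ring

/-- Proposition 2 (exact integral form of the approximated HTC outage probability):
for mutually independent Gamma-distributed channel gains and every `a > 0`,
`P(h_AS h_SA < a, min(h_AS h_SR, h_AR h_RA) < a)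
  = 1 − T(m_AS, β_AS; m_SA, β_SA; a) − T(m_AR, β_AR; m_RA, β_RA; a) ·
    [T(m_SR, β_SR; m_AS, β_AS; a) − Φ(a, a)]`. -/
theorem htc_outage_probability
    {Ω : Type*} [MeasurableSpace Ω] (P : Measure Ω) [IsProbabilityMeasure P]
    (mAS mSA mSR mAR mRA : ℕ)
    (hmAS : 0 < mAS) (hmSA : 0 < mSA) (hmSR : 0 < mSR) (hmAR : 0 < mAR) (hmRA : 0 < mRA)
    (βAS βSA βSR βAR βRA : ℝ)
    (hβAS : 0 < βAS) (hβSA : 0 < βSA) (hβSR : 0 < βSR) (hβAR : 0 < βAR) (hβRA : 0 < βRA)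
    (hAS hSA hSR hAR hRA : Ω → ℝ)
    (hmeasAS : Measurable hAS) (hmeasSA : Measurable hSA) (hmeasSR : Measurable hSR)
    (hmeasAR : Measurable hAR) (hmeasRA : Measurable hRA)
    (hdAS : Measure.map hAS P = gammaMeasure mAS βAS)
    (hdSA : Measure.map hSA P = gammaMeasure mSA βSA)
    (hdSR : Measure.map hSR P = gammaMeasure mSR βSR)
    (hdAR : Measure.map hAR P = gammaMeasure mAR βAR)
    (hdRA : Measure.map hRA P = gammaMeasure mRA βRA)
    (hInd : iIndepFun ![hAS, hSA, hSR, hAR, hRA] P)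
    (a : ℝ) (ha : 0 < a) :
    (P {ω | hAS ω * hSA ω < a ∧ min (hAS ω * hSR ω) (hAR ω * hRA ω) < a}).toReal =
      1 - Tfun mAS βAS mSA βSA a -
        Tfun mAR βAR mRA βRA a *
          (Tfun mSR βSR mAS βAS a - Phi mAS βAS mSA βSA mSR βSR a a) := by
  have hfmeas : ∀ i, Measurable (![hAS, hSA, hSR, hAR, hRA] i) := by
    intro i; fin_cases i
    exacts [hmeasAS, hmeasSA, hmeasSR, hmeasAR, hmeasRA]
  -- measurable sets in ℝ × ℝ
  have hs2 : MeasurableSet {p : ℝ×ℝ | a ≤ p.2 * p.1} :=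
    measurableSet_le measurable_const (measurable_snd.mul measurable_fst)
  have hs2' : MeasurableSet {p : ℝ×ℝ | a ≤ p.1 * p.2} :=
    measurableSet_le measurable_const (measurable_fst.mul measurable_snd)
  have hsG : MeasurableSet {p : ℝ × ℝ × ℝ | a ≤ p.2.1 * p.1 ∧ a ≤ p.2.2 * p.1} :=
    ((measurableSet_le measurable_const ((measurable_fst.comp measurable_snd).mul
        measurable_fst))).inter
      ((measurableSet_le measurable_const ((measurable_snd.comp measurable_snd).mul
        measurable_fst)))
  have hsF : MeasurableSet {p : ℝ × ℝ × ℝ | p.1 * p.2.1 < a ∧ a ≤ p.2.2 * p.1} :=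
    ((measurableSet_lt (measurable_fst.mul (measurable_fst.comp measurable_snd))
        measurable_const)).inter
      ((measurableSet_le measurable_const ((measurable_snd.comp measurable_snd).mul
        measurable_fst)))
  -- pairwise independences and joint laws
  have iSAAS : IndepFun hSA hAS P := hInd.indepFun (show (1 : Fin 5) ≠ 0 by decide)
  have iRAAR : IndepFun hRA hAR P := hInd.indepFun (show (4 : Fin 5) ≠ 3 by decide)
  have iASSR : IndepFun hAS hSR P := hInd.indepFun (show (0 : Fin 5) ≠ 2 by decide)
  have iSASR : IndepFun hSA hSR P := hInd.indepFun (show (1 : Fin 5) ≠ 2 by decide)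
  have mapSAAS : P.map (fun ω => (hSA ω, hAS ω))
      = (gammaMeasure mSA βSA).prod (gammaMeasure mAS βAS) := by
    rw [(indepFun_iff_map_prod_eq_prod_map_map hmeasSA.aemeasurable
      hmeasAS.aemeasurable).mp iSAAS, hdSA, hdAS]
  have mapRAAR : P.map (fun ω => (hRA ω, hAR ω))
      = (gammaMeasure mRA βRA).prod (gammaMeasure mAR βAR) := by
    rw [(indepFun_iff_map_prod_eq_prod_map_map hmeasRA.aemeasurable
      hmeasAR.aemeasurable).mp iRAAR, hdRA, hdAR]
  have mapASSR : P.map (fun ω => (hAS ω, hSR ω))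
      = (gammaMeasure mAS βAS).prod (gammaMeasure mSR βSR) := by
    rw [(indepFun_iff_map_prod_eq_prod_map_map hmeasAS.aemeasurable
      hmeasSR.aemeasurable).mp iASSR, hdAS, hdSR]
  have iAS_pair : IndepFun hAS (fun ω => (hSA ω, hSR ω)) P :=
    (hInd.indepFun_prodMk hfmeas 1 2 0 (by decide) (by decide)).symm
  have mapTriple : P.map (fun ω => (hAS ω, (hSA ω, hSR ω)))
      = (gammaMeasure mAS βAS).prod ((gammaMeasure mSA βSA).prod (gammaMeasure mSR βSR)) := by
    rw [(indepFun_iff_map_prod_eq_prod_map_map hmeasAS.aemeasurable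
      (hmeasSA.prodMk hmeasSR).aemeasurable).mp iAS_pair, hdAS,
      (indepFun_iff_map_prod_eq_prod_map_map hmeasSA.aemeasurable
      hmeasSR.aemeasurable).mp iSASR, hdSA, hdSR]
  -- block independence (triple vs pair)
  have iBlock : IndepFun (fun ω => (hAS ω, (hSA ω, hSR ω))) (fun ω => (hAR ω, hRA ω)) P := by
    classical
    have h := hInd.indepFun_finset {0,1,2} {3,4} (by decide) hfmeas
    let φ1 : (({0,1,2} : Finset (Fin 5)) → ℝ) → ℝ × (ℝ × ℝ) :=
      fun v => (v ⟨0, by decide⟩, (v ⟨1, by decide⟩, v ⟨2, by decide⟩))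
    let φ2 : (({3,4} : Finset (Fin 5)) → ℝ) → ℝ × ℝ :=
      fun v => (v ⟨3, by decide⟩, v ⟨4, by decide⟩)
    have hφ1 : Measurable φ1 := by fun_prop
    have hφ2 : Measurable φ2 := by fun_prop
    exact h.comp hφ1 hφ2
  -- the four computed probabilities
  have hAc : (P {ω | a ≤ hAS ω * hSA ω}).toReal = Tfun mAS βAS mSA βSA a := by
    have h0 : {ω | a ≤ hAS ω * hSA ω}
        = (fun ω => (hSA ω, hAS ω)) ⁻¹' {p : ℝ×ℝ | a ≤ p.2 * p.1} := rfl
    rw [h0, ← Measure.map_apply (hmeasSA.prodMk hmeasAS) hs2, mapSAAS]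
    exact prod_survival mAS hmAS βAS hβAS mSA hmSA βSA hβSA a ha
  have hCc : (P {ω | a ≤ hAR ω * hRA ω}).toReal = Tfun mAR βAR mRA βRA a := by
    have h0 : {ω | a ≤ hAR ω * hRA ω}
        = (fun ω => (hRA ω, hAR ω)) ⁻¹' {p : ℝ×ℝ | a ≤ p.2 * p.1} := rfl
    rw [h0, ← Measure.map_apply (hmeasRA.prodMk hmeasAR) hs2, mapRAAR]
    exact prod_survival mAR hmAR βAR hβAR mRA hmRA βRA hβRA a ha
  have hBc : (P {ω | a ≤ hSR ω * hAS ω}).toReal = Tfun mSR βSR mAS βAS a := by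
    have h0 : {ω | a ≤ hSR ω * hAS ω}
        = (fun ω => (hAS ω, hSR ω)) ⁻¹' {p : ℝ×ℝ | a ≤ p.2 * p.1} := rfl
    rw [h0, ← Measure.map_apply (hmeasAS.prodMk hmeasSR) hs2, mapASSR]
    exact prod_survival mSR hmSR βSR hβSR mAS hmAS βAS hβAS a ha
  have hG : (P {ω | a ≤ hSA ω * hAS ω ∧ a ≤ hSR ω * hAS ω}).toReal
      = Phi mAS βAS mSA βSA mSR βSR a a := by
    have h0 : {ω | a ≤ hSA ω * hAS ω ∧ a ≤ hSR ω * hAS ω}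
        = (fun ω => (hAS ω, (hSA ω, hSR ω))) ⁻¹'
          {p : ℝ × ℝ × ℝ | a ≤ p.2.1 * p.1 ∧ a ≤ p.2.2 * p.1} := rfl
    rw [h0, ← Measure.map_apply (hmeasAS.prodMk (hmeasSA.prodMk hmeasSR)) hsG, mapTriple]
    exact triple_survival mAS hmAS βAS hβAS mSA hmSA βSA hβSA mSR hmSR βSR hβSR a ha
  -- factorization
  have hF : (P {ω | hAS ω * hSA ω < a ∧ a ≤ hSR ω * hAS ω}) ≠ ⊤ := measure_ne_top _ _
  have hfact : P ({ω | hAS ω * hSA ω < a ∧ a ≤ hSR ω * hAS ω} ∩ {ω | a ≤ hAR ω * hRA ω})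
      = P {ω | hAS ω * hSA ω < a ∧ a ≤ hSR ω * hAS ω} * P {ω | a ≤ hAR ω * hRA ω} := by
    have h1 : {ω | hAS ω * hSA ω < a ∧ a ≤ hSR ω * hAS ω}
        = (fun ω => (hAS ω, (hSA ω, hSR ω))) ⁻¹'
          {p : ℝ × ℝ × ℝ | p.1 * p.2.1 < a ∧ a ≤ p.2.2 * p.1} := rfl
    have h2 : {ω | a ≤ hAR ω * hRA ω}
        = (fun ω => (hAR ω, hRA ω)) ⁻¹' {p : ℝ×ℝ | a ≤ p.1 * p.2} := rfl
    rw [h1, h2]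
    exact (indepFun_iff_measure_inter_preimage_eq_mul).mp iBlock _ _ hsF hs2'
  -- measurable Ω-sets
  have mA : MeasurableSet {ω | hAS ω * hSA ω < a} :=
    measurableSet_lt (hmeasAS.mul hmeasSA) measurable_const
  have mE : MeasurableSet {ω | hAS ω * hSA ω < a ∧ (hAS ω * hSR ω < a ∨ hAR ω * hRA ω < a)} :=
    mA.inter ((measurableSet_lt (hmeasAS.mul hmeasSR) measurable_const).union
      (measurableSet_lt (hmeasAR.mul hmeasRA) measurable_const))
  have mF : MeasurableSet {ω | hAS ω * hSA ω < a ∧ a ≤ hSR ω * hAS ω} :=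
    mA.inter (measurableSet_le measurable_const (hmeasSR.mul hmeasAS))
  have mG : MeasurableSet {ω | a ≤ hSA ω * hAS ω ∧ a ≤ hSR ω * hAS ω} :=
    (measurableSet_le measurable_const (hmeasSA.mul hmeasAS)).inter
      (measurableSet_le measurable_const (hmeasSR.mul hmeasAS))
  have mD : MeasurableSet ({ω | hAS ω * hSA ω < a ∧ a ≤ hSR ω * hAS ω}
      ∩ {ω | a ≤ hAR ω * hRA ω}) :=
    mF.inter (measurableSet_le measurable_const (hmeasAR.mul hmeasRA))
  -- set identities
  have hmin : {ω | hAS ω * hSA ω < a ∧ min (hAS ω * hSR ω) (hAR ω * hRA ω) < a}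
      = {ω | hAS ω * hSA ω < a ∧ (hAS ω * hSR ω < a ∨ hAR ω * hRA ω < a)} := by
    ext ω; simp [min_lt_iff]
  have hsplitA : P {ω | hAS ω * hSA ω < a ∧ (hAS ω * hSR ω < a ∨ hAR ω * hRA ω < a)}
      + P ({ω | hAS ω * hSA ω < a ∧ a ≤ hSR ω * hAS ω} ∩ {ω | a ≤ hAR ω * hRA ω})
      = P {ω | hAS ω * hSA ω < a} := by
    rw [← measure_union _ mD]
    · congr 1
      ext ω
      simp only [mem_union, mem_setOf_eq, mem_inter_iff]
      have e1 : a ≤ hSR ω * hAS ω ↔ ¬ (hAS ω * hSR ω < a) := by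
        rw [mul_comm, not_lt]
      have e2 : a ≤ hAR ω * hRA ω ↔ ¬ (hAR ω * hRA ω < a) := not_lt.symm
      rw [e1, e2]
      tauto
    · rw [Set.disjoint_left]
      intro ω h1 h2
      simp only [mem_setOf_eq, mem_inter_iff] at h1 h2
      have e1 : a ≤ hSR ω * hAS ω ↔ ¬ (hAS ω * hSR ω < a) := by
        rw [mul_comm, not_lt]
      have e2 : a ≤ hAR ω * hRA ω ↔ ¬ (hAR ω * hRA ω < a) := not_lt.symm
      rw [e1, e2] at h2
      tauto
  have hsplitB : P {ω | hAS ω * hSA ω < a ∧ a ≤ hSR ω * hAS ω}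
      + P {ω | a ≤ hSA ω * hAS ω ∧ a ≤ hSR ω * hAS ω}
      = P {ω | a ≤ hSR ω * hAS ω} := by
    rw [← measure_union _ mG]
    · congr 1
      ext ω
      simp only [mem_union, mem_setOf_eq]
      have e1 : a ≤ hSA ω * hAS ω ↔ ¬ (hAS ω * hSA ω < a) := by
        rw [mul_comm, not_lt]
      rw [e1]
      tauto
    · rw [Set.disjoint_left]
      intro ω h1 h2
      simp only [mem_setOf_eq] at h1 h2
      have e1 : a ≤ hSA ω * hAS ω ↔ ¬ (hAS ω * hSA ω < a) := by
        rw [mul_comm, not_lt]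
      rw [e1] at h2
      tauto
  have hcomplA : P {ω | hAS ω * hSA ω < a} + P {ω | a ≤ hAS ω * hSA ω} = 1 := by
    have h0 : {ω | a ≤ hAS ω * hSA ω} = {ω | hAS ω * hSA ω < a}ᶜ := by
      ext ω; simp [not_lt]
    rw [h0]
    simpa using measure_add_measure_compl (μ := P) mA
  -- pass to real numbers
  have t1 := congrArg ENNReal.toReal hsplitA
  have t2 := congrArg ENNReal.toReal hsplitB
  have t3 := congrArg ENNReal.toReal hcomplA
  have t4 := congrArg ENNReal.toReal hfact
  rw [ENNReal.toReal_add (measure_ne_top _ _) (measure_ne_top _ _)] at t1 t2 t3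
  rw [ENNReal.toReal_mul] at t4
  rw [hAc] at t3
  rw [hBc] at t2
  rw [hG] at t2
  rw [hCc] at t4
  simp only [ENNReal.toReal_one] at t3
  have hFr : (P {ω | hAS ω * hSA ω < a ∧ a ≤ hSR ω * hAS ω}).toReal
      = Tfun mSR βSR mAS βAS a - Phi mAS βAS mSA βSA mSR βSR a a := by linarith
  rw [hFr] at t4
  rw [t4] at t1
  rw [hmin]
  linarith
end
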